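/- arXiv:2602.02976 — 8 statements merged into one kernel-verified Lean document; each statement's English description precedes it below -/
import Mathlib

section
/- Let κ = ⟨κ₀ ≤ … ≤ κ_n⟩ be a weakly increasing tuple of infinite cardinals and let A ⊆ {0,…,n} be such that both A and its complement A^c are nonempty. Then the set C_A of continuous functions D_A → ℤ/2 has cardinality exactly (κ_{max A^c})^(κ_{max A}) (cardinal exponentiation). -/
set_option linter.unusedSectionVars false

open Cardinal Function OnePoint

noncomputable section

instance (o : Ordinal) : TopologicalSpace o.ToType := ⊥
instance (o : Ordinal) : DiscreteTopology o.ToType := ⟨rfl⟩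
instance : TopologicalSpace (ZMod 2) := ⊥
instance : DiscreteTopology (ZMod 2) := ⟨rfl⟩

/-- `Alpha c` : the one-point compactification of the discrete space of cardinality `c`. -/
abbrev Alpha (c : Cardinal) : Type := OnePoint c.ord.ToType

variable {ι : Type} [Fintype ι] [DecidableEq ι]

/-- `DD κ A` : the set of points `x ∈ X(κ)` with `x i ≠ ∞` for all `i ∈ A`. -/
def DD (κ : ι → Cardinal) (A : Finset ι) : Set (∀ i, Alpha (κ i)) :=
  {x | ∀ i ∈ A, x i ≠ ∞}

/-- `FF κ A` : the `A`-facet of `X(κ)`. -/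
def FF (κ : ι → Cardinal) (A : Finset ι) : Set (∀ i, Alpha (κ i)) :=
  {x | ∀ i, x i ≠ ∞ ↔ i ∈ A}

/-- `X(κ)⁻`, the complement of the point `(∞,…,∞)`. -/
def Xminus (κ : ι → Cardinal) : Set (∀ i, Alpha (κ i)) :=
  {x | ∃ i, x i ≠ ∞}

/-- A (raw) cochain: a family of functions on the `DD κ A`. -/
abbrev Cochain (κ : ι → Cardinal) : Type :=
  ∀ A : Finset ι, ↥(DD κ A) → ZMod 2

/-- Restriction of a function on `D_A` to `D_B`, for `A ⊆ B`. -/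
def res {κ : ι → Cardinal} {A B : Finset ι} (h : A ⊆ B)
    (f : ↥(DD κ A) → ZMod 2) : ↥(DD κ B) → ZMod 2 :=
  fun x => f ⟨x.1, fun i hi => x.2 i (h hi)⟩

/-- The Čech coboundary `(df)_A = ∑_{i ∈ A} f_{A ∖ {i}}` (restricted to `D_A`). -/
def cb (κ : ι → Cardinal) (f : Cochain κ) : Cochain κ :=
  fun A x => ∑ i ∈ A, res (Finset.erase_subset i A) (f (A.erase i)) x

/-- `f` is a `k`-cochain: each `f_A` for `|A| = k+1` is continuous. -/
def IsCochain (κ : ι → Cardinal) (k : ℕ) (f : Cochain κ) : Prop :=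
  ∀ A : Finset ι, A.card = k + 1 → Continuous (f A)

/-- `f` is a `k`-cocycle. -/
def IsCocycle (κ : ι → Cardinal) (k : ℕ) (f : Cochain κ) : Prop :=
  IsCochain κ k f ∧ ∀ A : Finset ι, A.card = k + 2 → ∀ x, cb κ f A x = 0

/-- `f` is a `k`-coboundary: `f = dg` for some `(k-1)`-cochain `g`. -/
def IsCoboundary (κ : ι → Cardinal) (k : ℕ) (f : Cochain κ) : Prop :=
  ∃ g : Cochain κ, IsCochain κ (k - 1) g ∧
    ∀ A : Finset ι, A.card = k + 1 → ∀ x, f A x = cb κ g A x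

/-- `Y` is a `k`-Fubini partition of `X(κ)⁻`. -/
def IsFubini (κ : ι → Cardinal) (k : ℕ) (Y : ι → Set (∀ i, Alpha (κ i))) : Prop :=
  Pairwise (Disjoint on Y) ∧ (⋃ i, Y i) = Xminus κ ∧
  ∀ A : Finset ι, k + 1 ≤ A.card →
    (∀ i ∉ A, IsClopen ((Subtype.val : ↥(DD κ A) → _) ⁻¹' Y i)) ∧
    {x : ↥(Xminus κ) | (x : ∀ i, Alpha (κ i)) ∈ FF κ A} ⊆
      interior ((Subtype.val : ↥(Xminus κ) → _) ⁻¹' ⋃ i ∈ A, Y i)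

/-- `f` is a top-degree coboundary: a sum of functions, each extending continuously to
`D_{univ ∖ {j}}`. -/
def TopCoboundary (κ : ι → Cardinal)
    (f : (∀ i, (κ i).ord.ToType) → ZMod 2) : Prop :=
  ∃ g : ι → ((∀ i, (κ i).ord.ToType) → ZMod 2),
    (∀ x, f x = ∑ j, g j x) ∧
    ∀ j : ι, ∃ G : ↥(DD κ (Finset.univ.erase j)) → ZMod 2, Continuous G ∧
      ∀ x, g j x = G ⟨fun i => ((x i : (κ i).ord.ToType) : Alpha (κ i)),
        fun i _ => OnePoint.coe_ne_infty (x i)⟩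

/-- The group of `k`-cocycles. -/
def Zgrp (κ : ι → Cardinal) (k : ℕ) : AddSubgroup (Cochain κ) :=
  AddSubgroup.closure {f | IsCocycle κ k f}

/-- The group of `k`-coboundaries. -/
def Bgrp (κ : ι → Cardinal) (k : ℕ) : AddSubgroup (Cochain κ) :=
  AddSubgroup.closure {f | IsCoboundary κ k f}

/-- The `k`-th Čech cohomology group of `X(κ)⁻` with `ℤ/2` coefficients. -/
abbrev Hgrp (κ : ι → Cardinal) (k : ℕ) :=
  ↥(Zgrp κ k) ⧸ (Bgrp κ k).addSubgroupOf (Zgrp κ k)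

/-- The cohomology class of a `k`-cocycle. -/
abbrev mkH (κ : ι → Cardinal) (k : ℕ) (f : Cochain κ) (hf : IsCocycle κ k f) : Hgrp κ k :=
  QuotientAddGroup.mk ⟨f, AddSubgroup.subset_closure hf⟩

/-- Combine a point of `∏_{i ∉ B} α(κ i)` with a point of `∏_{i ∈ B} κ i`. -/
def combineBC (κ : ι → Cardinal) (B : Finset ι)
    (x : ∀ i : {i : ι // i ∉ B}, Alpha (κ i))
    (y : ∀ i : ↥B, (κ (i : ι)).ord.ToType) : ∀ i, Alpha (κ i) :=
  fun i => if h : i ∈ B then ((y ⟨i, h⟩ : (κ i).ord.ToType) : Alpha (κ i)) else x ⟨i, h⟩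

lemma combineBC_mem (κ : ι → Cardinal) (B : Finset ι)
    (x : ∀ i : {i : ι // i ∉ B}, Alpha (κ i))
    (y : ∀ i : ↥B, (κ (i : ι)).ord.ToType) : combineBC κ B x y ∈ DD κ B := by
  intro i hi
  simp only [combineBC, dif_pos hi]
  exact OnePoint.coe_ne_infty _

/-- The point `y^∞` : `y` on coordinates in `B`, `∞` outside `B`. -/
def extendInfty (κ : ι → Cardinal) (B : Finset ι)
    (y : ∀ i : ↥B, (κ (i : ι)).ord.ToType) : ∀ i, Alpha (κ i) :=
  combineBC κ B (fun _ => ∞) y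

lemma extendInfty_mem (κ : ι → Cardinal) (B : Finset ι)
    (y : ∀ i : ↥B, (κ (i : ι)).ord.ToType) : extendInfty κ B y ∈ DD κ B :=
  combineBC_mem κ B _ y

/-- The face restriction map `Res^k_B`. -/
def ResB (κ : ι → Cardinal) (B : Finset ι) (f : Cochain κ) :
    (∀ i : ↥B, (κ (i : ι)).ord.ToType) → ZMod 2 :=
  fun y => f B ⟨extendInfty κ B y, extendInfty_mem κ B y⟩

/-- The map `φ_{f,B}` sending `x` to `f_B(x, ·)`. -/
def phiMap (κ : ι → Cardinal) (B : Finset ι) (f : Cochain κ) :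
    (∀ i : {i : ι // i ∉ B}, Alpha (κ i)) → (∀ i : ↥B, (κ (i : ι)).ord.ToType) → ZMod 2 :=
  fun x y => f B ⟨combineBC κ B x y, combineBC_mem κ B x y⟩

/-- Combine a point `x` (used on the first `n-k+1` coordinates) with a tuple `y ∈ Q`
of values on the last `k` coordinates. -/
def combineQ {n : ℕ} (κ : Fin (n + 1) → Cardinal) (k : ℕ)
    (x : ∀ i, Alpha (κ i))
    (y : ∀ i : {i : Fin (n + 1) // n - k + 1 ≤ (i : ℕ)}, (κ (i : Fin (n + 1))).ord.ToType) :
    ∀ i, Alpha (κ i) :=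
  fun i => if h : n - k + 1 ≤ (i : ℕ) then
    ((y ⟨i, h⟩ : (κ i).ord.ToType) : Alpha (κ i)) else x i


/-! ### Auxiliary material for `stmt3` -/

section AuxStmt3

open Classical in
noncomputable def proj1 {c : Cardinal} (G : Finset c.ord.ToType) (z : Alpha c) :
    Option ↥G :=
  if h : ∃ d : c.ord.ToType, d ∈ G ∧ z = ↑d then Option.some ⟨h.choose, h.choose_spec.1⟩
  else none

/-- Truncation of a point of `Alpha c` to a finite set `G`. -/
noncomputable def trunc1 {c : Cardinal} (G : Finset c.ord.ToType) (z : Alpha c) : Alpha c :=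
  (proj1 G z).elim ∞ (fun e => ↑(e : c.ord.ToType))

lemma trunc1_eq_self_or_infty {c : Cardinal} (G : Finset c.ord.ToType) (z : Alpha c) :
    trunc1 G z = z ∨ trunc1 G z = ∞ := by
  unfold trunc1 proj1
  split
  · rename_i h
    exact Or.inl h.choose_spec.2.symm
  · right; rfl

lemma trunc1_coe_mem {c : Cardinal} {G : Finset c.ord.ToType} {e : c.ord.ToType}
    (he : e ∈ G) : trunc1 G (↑e : Alpha c) = ↑e := by
  have h : ∃ d : c.ord.ToType, d ∈ G ∧ (↑e : Alpha c) = ↑d := ⟨e, he, rfl⟩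
  unfold trunc1 proj1
  rw [dif_pos h]
  exact h.choose_spec.2.symm

/-- The coordinatewise box condition around a point `p`. -/
def BoxCond {c : Cardinal} (p : Alpha c) (G : Finset c.ord.ToType) (z : Alpha c) : Prop :=
  (p = ∞ → ∀ d : c.ord.ToType, d ∈ G → z ≠ ↑d) ∧ (p ≠ ∞ → z = p)

lemma boxCond_self {c : Cardinal} (p : Alpha c) (G : Finset c.ord.ToType) : BoxCond p G p :=
  ⟨fun hp d _ => by rw [hp]; exact OnePoint.infty_ne_coe d, fun _ => rfl⟩

lemma boxCond_open {c : Cardinal} (p : Alpha c) (G : Finset c.ord.ToType) :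
    IsOpen {z : Alpha c | BoxCond p G z} := by
  by_cases hp : p = ∞
  · have hset : {z : Alpha c | BoxCond p G z} = {z | ∀ d : c.ord.ToType, d ∈ G → z ≠ ↑d} := by
      ext z; simp [BoxCond, hp]
    rw [hset, OnePoint.isOpen_iff_of_mem
      (by simp only [Set.mem_setOf_eq]; exact fun d _ => OnePoint.infty_ne_coe d)]
    have hpre : (((↑) : c.ord.ToType → Alpha c) ⁻¹' {z | ∀ d : c.ord.ToType, d ∈ G → z ≠ ↑d})ᶜ = ↑G := by
      ext y
      simp [OnePoint.coe_eq_coe]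
    rw [hpre]
    exact ⟨isClosed_discrete _, G.finite_toSet.isCompact⟩
  · have hset : {z : Alpha c | BoxCond p G z} = {p} := by
      ext z; simp [BoxCond, hp]
    rw [hset, OnePoint.isOpen_iff_of_notMem (fun h => hp (Set.mem_singleton_iff.1 h).symm)]
    exact isOpen_discrete _

lemma boxCond_trunc {c : Cardinal} {p : Alpha c} {G F : Finset c.ord.ToType}
    (hGF : ∀ x ∈ G, x ∈ F) (hpG : ∀ e : c.ord.ToType, p = ↑e → e ∈ G) {z : Alpha c}
    (hz : BoxCond p G z) : BoxCond p G (trunc1 F z) := by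
  constructor
  · intro hp d hd
    rcases trunc1_eq_self_or_infty F z with h | h
    · rw [h]; exact hz.1 hp d hd
    · rw [h]; exact OnePoint.infty_ne_coe d
  · intro hp
    obtain ⟨e, he⟩ := OnePoint.ne_infty_iff_exists.1 hp
    have hzp : z = p := hz.2 hp
    have heG : e ∈ G := hpG e he.symm
    rw [hzp, ← he, trunc1_coe_mem (hGF e heG)]

lemma isOpen_coe_singleton {c : Cardinal} (e : c.ord.ToType) :
    IsOpen ({(↑e : Alpha c)} : Set (Alpha c)) :=
  (OnePoint.isOpen_iff_of_notMem
    (fun h => OnePoint.infty_ne_coe e (Set.mem_singleton_iff.1 h))).2 (isOpen_discrete _)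

lemma exists_box {c : Cardinal} {u : Set (Alpha c)} (hu : IsOpen u) {p : Alpha c}
    (hp : p ∈ u) :
    ∃ G : Finset c.ord.ToType, (∀ e : c.ord.ToType, p = ↑e → e ∈ G) ∧ ∀ z, BoxCond p G z → z ∈ u := by
  by_cases hpi : p = ∞
  · subst hpi
    have hcomp : IsCompact ((((↑) : c.ord.ToType → Alpha c) ⁻¹' u)ᶜ) :=
      ((OnePoint.isOpen_iff_of_mem' hp).1 hu).1
    have hfin : ((((↑) : c.ord.ToType → Alpha c) ⁻¹' u)ᶜ).Finite := isCompact_iff_finite.1 hcomp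
    refine ⟨hfin.toFinset, fun e he => absurd he (OnePoint.infty_ne_coe e), ?_⟩
    intro z hz
    by_cases hzi : z = ∞
    · rw [hzi]; exact hp
    · obtain ⟨y, hy⟩ := OnePoint.ne_infty_iff_exists.1 hzi
      have hyG : y ∉ hfin.toFinset := fun hmem => hz.1 rfl y hmem hy.symm
      rw [Set.Finite.mem_toFinset, Set.mem_compl_iff, not_not] at hyG
      rw [← hy]; exact hyG
  · obtain ⟨e, he⟩ := OnePoint.ne_infty_iff_exists.1 hpi
    refine ⟨{e}, fun e' he' => Finset.mem_singleton.2 (OnePoint.coe_eq_coe.1 (he.trans he')).symm,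
      fun z hz => ?_⟩
    rw [hz.2 hpi]; exact hp

lemma exists_trunc {J : Type} [Fintype J] (μ : J → Cardinal)
    (f : (∀ j, Alpha (μ j)) → ZMod 2) (hf : Continuous f) :
    ∃ F : ∀ j, Finset ((μ j).ord.ToType),
      ∀ x, f (fun j => trunc1 (F j) (x j)) = f x := by
  have hbox : ∀ p : ∀ j, Alpha (μ j), ∃ G : ∀ j, Finset ((μ j).ord.ToType),
      (∀ j, ∀ e : (μ j).ord.ToType, p j = ↑e → e ∈ G j) ∧
      ∀ x : ∀ j, Alpha (μ j), (∀ j, BoxCond (p j) (G j) (x j)) → f x = f p := by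
    intro p
    have hU : IsOpen (f ⁻¹' {f p}) := (isOpen_discrete _).preimage hf
    obtain ⟨u, hu, hsub⟩ := (isOpen_pi_iff'.1 hU) p rfl
    choose G hG1 hG2 using fun j => exists_box (hu j).1 (hu j).2
    exact ⟨G, hG1, fun x hx =>
      Set.mem_singleton_iff.1 (hsub (fun j _ => hG2 j _ (hx j)))⟩
  choose G hG1 hG2 using hbox
  have hcover : (Set.univ : Set (∀ j, Alpha (μ j))) ⊆
      ⋃ p, {x | ∀ j, BoxCond (p j) (G p j) (x j)} :=
    fun x _ => Set.mem_iUnion.2 ⟨x, fun j => boxCond_self _ _⟩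
  have hopen : ∀ p : ∀ j, Alpha (μ j),
      IsOpen {x : ∀ j, Alpha (μ j) | ∀ j, BoxCond (p j) (G p j) (x j)} := by
    intro p
    have : {x : ∀ j, Alpha (μ j) | ∀ j, BoxCond (p j) (G p j) (x j)} =
        ⋂ j, (fun x : ∀ j, Alpha (μ j) => x j) ⁻¹' {z | BoxCond (p j) (G p j) z} := by
      ext x; simp
    rw [this]
    exact isOpen_iInter_of_finite fun j => (boxCond_open _ _).preimage (continuous_apply j)
  obtain ⟨t, ht⟩ := isCompact_univ.elim_finite_subcover _ hopen hcover
  refine ⟨fun j => t.sup (fun p => G p j), fun x => ?_⟩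
  obtain ⟨p, hpt, hxp⟩ := Set.mem_iUnion₂.1 (ht (Set.mem_univ x))
  have h1 : f (fun j => trunc1 (t.sup (fun p => G p j)) (x j)) = f p :=
    hG2 p _ (fun j => boxCond_trunc (G := G p j) (F := t.sup (fun p => G p j))
      (fun e he => Finset.mem_of_subset (Finset.le_sup hpt) he) (hG1 p j) (hxp j))
  have h2 : f x = f p := hG2 p x hxp
  rw [h1, h2]

lemma card_cont_le {J : Type} [Fintype J] (μ : J → Cardinal) (hμ : ∀ j, ℵ₀ ≤ μ j)
    {c : Cardinal} (hc : ℵ₀ ≤ c) (hle : ∀ j, μ j ≤ c) :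
    #{f : (∀ j, Alpha (μ j)) → ZMod 2 // Continuous f} ≤ c := by
  let Code := Σ F : ∀ j, Finset ((μ j).ord.ToType), ((∀ j, Option ↥(F j)) → ZMod 2)
  let emb : ∀ F : ∀ j, Finset ((μ j).ord.ToType),
      (∀ j, Option ↥(F j)) → ∀ j, Alpha (μ j) :=
    fun F y j => (y j).elim ∞ (fun e => ↑(e : (μ j).ord.ToType))
  let code : {f : (∀ j, Alpha (μ j)) → ZMod 2 // Continuous f} → Code :=
    fun f => ⟨(exists_trunc μ f.1 f.2).choose,
      fun y => f.1 (emb (exists_trunc μ f.1 f.2).choose y)⟩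
  have key : ∀ f : {f : (∀ j, Alpha (μ j)) → ZMod 2 // Continuous f},
      ∀ x, f.1 x = (code f).2 (fun j => proj1 ((code f).1 j) (x j)) := by
    intro f x
    exact ((exists_trunc μ f.1 f.2).choose_spec x).symm
  have hinj : Function.Injective code := by
    intro f g h
    apply Subtype.ext; funext x
    have h2 := congrArg
      (fun (cd : Code) => cd.2 (fun j => proj1 (cd.1 j) (x j))) h
    calc f.1 x = (code f).2 (fun j => proj1 ((code f).1 j) (x j)) := key f x
      _ = (code g).2 (fun j => proj1 ((code g).1 j) (x j)) := h2
      _ = g.1 x := (key g x).symm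
  have hμ' : ∀ j, #(Finset ((μ j).ord.ToType)) = μ j := by
    intro j
    haveI : Infinite ((μ j).ord.ToType) := by
      rw [Cardinal.infinite_iff, Cardinal.mk_toType, Cardinal.card_ord]
      exact hμ j
    rw [mk_finset_of_infinite, Cardinal.mk_toType, Cardinal.card_ord]
  have h1 : #(∀ j, Finset ((μ j).ord.ToType)) ≤ c := by
    rw [Cardinal.mk_pi]
    calc Cardinal.prod (fun j => #(Finset ((μ j).ord.ToType)))
        ≤ Cardinal.prod (fun _ : J => c) :=
          Cardinal.prod_le_prod _ _ (fun j => (hμ' j).trans_le (hle j))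
      _ = c ^ #J := Cardinal.prod_const' J c
      _ = c ^ (Fintype.card J : ℕ) := by rw [Cardinal.mk_fintype, Cardinal.power_natCast]
      _ ≤ c := Cardinal.power_nat_le hc
  calc #{f : (∀ j, Alpha (μ j)) → ZMod 2 // Continuous f}
      ≤ #Code := mk_le_of_injective hinj
    _ ≤ c := by
        have : #Code = Cardinal.sum
            (fun F : ∀ j, Finset ((μ j).ord.ToType) =>
              #((∀ j, Option ↥(F j)) → ZMod 2)) := Cardinal.mk_sigma _
        rw [this]
        calc Cardinal.sum (fun F : ∀ j, Finset ((μ j).ord.ToType) =>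
              #((∀ j, Option ↥(F j)) → ZMod 2))
            ≤ Cardinal.sum (fun _ : ∀ j, Finset ((μ j).ord.ToType) => ℵ₀) :=
              Cardinal.sum_le_sum _ _ (fun F => le_of_lt (Cardinal.lt_aleph0_of_finite _))
          _ = #(∀ j, Finset ((μ j).ord.ToType)) * ℵ₀ := Cardinal.sum_const' _ _
          _ ≤ c * c := mul_le_mul' h1 hc
          _ = c := Cardinal.mul_eq_self hc

/-- The slice map: combine values on `A` with a point of the `Aᶜ`-face. -/
noncomputable def sliceVal {ι : Type} [DecidableEq ι] (κ : ι → Cardinal) (A : Finset ι)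
    (d : ∀ i : {i // i ∈ A}, (κ i.1).ord.ToType)
    (k : ∀ j : {i // i ∉ A}, Alpha (κ j.1)) : ∀ i, Alpha (κ i) :=
  fun i => if h : i ∈ A then ((d ⟨i, h⟩ : (κ i).ord.ToType) : Alpha (κ i)) else k ⟨i, h⟩

noncomputable def sliceF {ι : Type} [DecidableEq ι] (κ : ι → Cardinal) (A : Finset ι)
    (d : ∀ i : {i // i ∈ A}, (κ i.1).ord.ToType)
    (k : ∀ j : {i // i ∉ A}, Alpha (κ j.1)) : ↥(DD κ A) :=
  ⟨sliceVal κ A d k, fun i hi => by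
    unfold sliceVal
    simp only [dif_pos hi]
    exact OnePoint.coe_ne_infty _⟩

lemma sliceF_cont {ι : Type} [DecidableEq ι] (κ : ι → Cardinal) (A : Finset ι)
    (d : ∀ i : {i // i ∈ A}, (κ i.1).ord.ToType) :
    Continuous (sliceF κ A d) := by
  refine Continuous.subtype_mk (continuous_pi fun i => ?_) _
  by_cases h : i ∈ A
  · show Continuous fun k : ∀ j : {i // i ∉ A}, Alpha (κ j.1) => sliceVal κ A d k i
    unfold sliceVal
    simp only [dif_pos h]
    exact continuous_const
  · show Continuous fun k : ∀ j : {i // i ∉ A}, Alpha (κ j.1) => sliceVal κ A d k i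
    unfold sliceVal
    simp only [dif_neg h]
    exact continuous_apply _

open Classical in
noncomputable def indFun {ι : Type} (κ : ι → Cardinal) (A : Finset ι) (a b : ι)
    (g : (κ a).ord.ToType → (κ b).ord.ToType) (x : ↥(DD κ A)) : ZMod 2 :=
  if ∃ e : (κ a).ord.ToType, x.1 a = ↑e ∧ x.1 b = ↑(g e) then 1 else 0

lemma indFun_eq_one {ι : Type} {κ : ι → Cardinal} {A : Finset ι} {a b : ι}
    {g : (κ a).ord.ToType → (κ b).ord.ToType} {x : ↥(DD κ A)} (e : (κ a).ord.ToType)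
    (h1 : x.1 a = ↑e) (h2 : x.1 b = ↑(g e)) : indFun κ A a b g x = 1 := by
  unfold indFun
  rw [if_pos ⟨e, h1, h2⟩]

lemma indFun_eq_zero {ι : Type} {κ : ι → Cardinal} {A : Finset ι} {a b : ι}
    {g : (κ a).ord.ToType → (κ b).ord.ToType} {x : ↥(DD κ A)}
    (h : ∀ e : (κ a).ord.ToType, x.1 a = ↑e → x.1 b ≠ ↑(g e)) : indFun κ A a b g x = 0 := by
  unfold indFun
  rw [if_neg]
  rintro ⟨e, h1, h2⟩
  exact h e h1 h2

lemma indFun_cont {ι : Type} (κ : ι → Cardinal) (A : Finset ι) (a b : ι)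
    (ha : a ∈ A) (g : (κ a).ord.ToType → (κ b).ord.ToType) :
    Continuous (indFun κ A a b g) := by
  apply IsLocallyConstant.continuous
  rw [IsLocallyConstant.iff_exists_open]
  intro x
  have hxa : x.1 a ≠ ∞ := x.2 a ha
  obtain ⟨e₀, he₀⟩ : ∃ e : (κ a).ord.ToType, x.1 a = ↑e := by
    rcases OnePoint.ne_infty_iff_exists.1 hxa with ⟨e, he⟩
    exact ⟨e, he.symm⟩
  have hconta : Continuous (fun y : ↥(DD κ A) => y.1 a) :=
    (continuous_apply a).comp continuous_subtype_val
  have hcontb : Continuous (fun y : ↥(DD κ A) => y.1 b) :=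
    (continuous_apply b).comp continuous_subtype_val
  by_cases hxb : x.1 b = ↑(g e₀)
  · refine ⟨{y : ↥(DD κ A) | y.1 a = ↑e₀ ∧ y.1 b = ↑(g e₀)}, ?_, ⟨he₀, hxb⟩, ?_⟩
    · exact IsOpen.inter ((isOpen_coe_singleton e₀).preimage hconta)
        ((isOpen_coe_singleton (g e₀)).preimage hcontb)
    · intro y hy
      rw [indFun_eq_one e₀ hy.1 hy.2, indFun_eq_one e₀ he₀ hxb]
  · refine ⟨{y : ↥(DD κ A) | y.1 a = ↑e₀ ∧ y.1 b ≠ ↑(g e₀)}, ?_, ⟨he₀, hxb⟩, ?_⟩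
    · refine IsOpen.inter ((isOpen_coe_singleton e₀).preimage hconta) ?_
      exact (isOpen_compl_singleton (x := ((g e₀ : (κ b).ord.ToType) : Alpha (κ b)))).preimage
        hcontb
    · intro y hy
      have hy0 : indFun κ A a b g y = 0 := by
        apply indFun_eq_zero
        intro e h1 h2
        have : e = e₀ := OnePoint.coe_eq_coe.1 (h1.symm.trans hy.1)
        rw [this] at h2
        exact hy.2 h2
      have hx0 : indFun κ A a b g x = 0 := by
        apply indFun_eq_zero
        intro e h1 h2
        have : e = e₀ := OnePoint.coe_eq_coe.1 (h1.symm.trans he₀)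
        rw [this] at h2
        exact hxb h2
      rw [hy0, hx0]

end AuxStmt3

/-- If `A` and `Aᶜ` are nonempty, then `|C_A| = κ_{max Aᶜ} ^ κ_{max A}`. -/
theorem stmt3 (n : ℕ) (κ : Fin (n + 1) → Cardinal) (hmono : Monotone κ)
    (hinf : ∀ i, ℵ₀ ≤ κ i)
    (A : Finset (Fin (n + 1))) (hA : A.Nonempty) (hAc : Aᶜ.Nonempty) :
    #{f : ↥(DD κ A) → ZMod 2 // Continuous f} = κ (Aᶜ.max' hAc) ^ κ (A.max' hA) := by
  classical
  set a := A.max' hA with ha_def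
  set b := Aᶜ.max' hAc with hb_def
  have ha : a ∈ A := A.max'_mem hA
  have hbc : b ∈ Aᶜ := Aᶜ.max'_mem hAc
  have hb : b ∉ A := Finset.mem_compl.1 hbc
  have hκb0 : κ b ≠ 0 := (aleph0_pos.trans_le (hinf b)).ne'
  have hne : ∀ i, Nonempty ((κ i).ord.ToType) := fun i =>
    Ordinal.toType_nonempty_iff_ne_zero.2 (by
      rw [Ne, Cardinal.ord_eq_zero]
      exact (aleph0_pos.trans_le (hinf i)).ne')
  -- Upper bound
  have upper : #{f : ↥(DD κ A) → ZMod 2 // Continuous f} ≤ κ b ^ κ a := by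
    have hK : #{g : (∀ j : {i : Fin (n + 1) // i ∉ A}, Alpha (κ j.1)) → ZMod 2 //
        Continuous g} ≤ κ b :=
      card_cont_le (J := {i : Fin (n + 1) // i ∉ A}) (fun j => κ j.1) (fun j => hinf _) (hinf b)
        (fun j => hmono (Finset.le_max' _ _ (Finset.mem_compl.2 j.2)))
    have hinj : Function.Injective
        (fun (f : {f : ↥(DD κ A) → ZMod 2 // Continuous f}) =>
          (fun d => (⟨fun k => f.1 (sliceF κ A d k), f.2.comp (sliceF_cont κ A d)⟩ :
            {g : (∀ j : {i : Fin (n + 1) // i ∉ A}, Alpha (κ j.1)) → ZMod 2 //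
              Continuous g}))) := by
      intro f g h
      apply Subtype.ext; funext x
      have hx : ∀ i : {i : Fin (n + 1) // i ∈ A}, ∃ e : (κ i.1).ord.ToType, x.1 i.1 = ↑e := fun i => by
        rcases OnePoint.ne_infty_iff_exists.1 (x.2 i.1 i.2) with ⟨e, he⟩
        exact ⟨e, he.symm⟩
      choose dx hdx using hx
      have hxrec : sliceF κ A dx (fun j => x.1 j.1) = x := by
        apply Subtype.ext; funext i
        show sliceVal κ A dx (fun j => x.1 j.1) i = x.1 i
        unfold sliceVal
        by_cases hiA : i ∈ A
        · rw [dif_pos hiA]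
          exact (hdx ⟨i, hiA⟩).symm
        · rw [dif_neg hiA]
      have h2 : f.1 (sliceF κ A dx (fun j => x.1 j.1)) =
          g.1 (sliceF κ A dx (fun j => x.1 j.1)) :=
        congrArg (fun (Φ : (∀ i : {i : Fin (n + 1) // i ∈ A}, (κ i.1).ord.ToType) →
            {g : (∀ j : {i : Fin (n + 1) // i ∉ A}, Alpha (κ j.1)) → ZMod 2 //
              Continuous g}) => (Φ dx).1 (fun j => x.1 j.1)) h
      rwa [hxrec] at h2
    have hD : #(∀ i : {i : Fin (n + 1) // i ∈ A}, (κ i.1).ord.ToType) ≤ κ a := by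
      rw [Cardinal.mk_pi]
      calc Cardinal.prod (fun i : {i : Fin (n + 1) // i ∈ A} => #((κ i.1).ord.ToType))
          ≤ Cardinal.prod (fun _ : {i : Fin (n + 1) // i ∈ A} => κ a) :=
            Cardinal.prod_le_prod _ _ (fun i => by
              rw [Cardinal.mk_toType, Cardinal.card_ord]
              exact hmono (Finset.le_max' _ _ i.2))
        _ = κ a ^ #{i : Fin (n + 1) // i ∈ A} := Cardinal.prod_const' _ _
        _ = κ a ^ (Fintype.card {i : Fin (n + 1) // i ∈ A} : ℕ) := by
            rw [Cardinal.mk_fintype, Cardinal.power_natCast]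
        _ ≤ κ a := Cardinal.power_nat_le (hinf a)
    calc #{f : ↥(DD κ A) → ZMod 2 // Continuous f}
        ≤ #((∀ i : {i : Fin (n + 1) // i ∈ A}, (κ i.1).ord.ToType) →
            {g : (∀ j : {i : Fin (n + 1) // i ∉ A}, Alpha (κ j.1)) → ZMod 2 //
              Continuous g}) := mk_le_of_injective hinj
      _ = #{g : (∀ j : {i : Fin (n + 1) // i ∉ A}, Alpha (κ j.1)) → ZMod 2 //
            Continuous g} ^ #(∀ i : {i : Fin (n + 1) // i ∈ A}, (κ i.1).ord.ToType) :=
            (Cardinal.power_def _ _).symm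
      _ ≤ κ b ^ #(∀ i : {i : Fin (n + 1) // i ∈ A}, (κ i.1).ord.ToType) :=
            Cardinal.power_le_power_right hK
      _ ≤ κ b ^ κ a := Cardinal.power_le_power_left hκb0 hD
  -- Lower bound
  have lower : κ b ^ κ a ≤ #{f : ↥(DD κ A) → ZMod 2 // Continuous f} := by
    have harr : κ b ^ κ a = #((κ a).ord.ToType → (κ b).ord.ToType) := by
      rw [show #((κ a).ord.ToType → (κ b).ord.ToType) =
          #((κ b).ord.ToType) ^ #((κ a).ord.ToType) from (Cardinal.power_def _ _).symm,
        Cardinal.mk_toType, Cardinal.card_ord, Cardinal.mk_toType, Cardinal.card_ord]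
    rw [harr]
    apply mk_le_of_injective
      (f := fun (g : (κ a).ord.ToType → (κ b).ord.ToType) =>
        (⟨indFun κ A a b g, indFun_cont κ A a b ha g⟩ :
          {f : ↥(DD κ A) → ZMod 2 // Continuous f}))
    intro g g' h
    have h1 : indFun κ A a b g = indFun κ A a b g' := congrArg Subtype.val h
    funext e
    by_contra hnegg
    -- construct the witness point
    haveI : ∀ i, Nonempty ((κ i).ord.ToType) := hne
    set d₀ : ∀ i : {i : Fin (n + 1) // i ∈ A}, (κ i.1).ord.ToType :=
      Function.update (fun i : {i : Fin (n + 1) // i ∈ A} => Classical.arbitrary _)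
        ⟨a, ha⟩ e with hd₀
    set k₀ : ∀ j : {i : Fin (n + 1) // i ∉ A}, Alpha (κ j.1) :=
      Function.update (fun j : {i : Fin (n + 1) // i ∉ A} => (∞ : Alpha (κ j.1)))
        ⟨b, hb⟩ ↑(g e) with hk₀
    set x : ↥(DD κ A) := sliceF κ A d₀ k₀ with hx
    have hxa : x.1 a = ↑e := by
      show sliceVal κ A d₀ k₀ a = ↑e
      unfold sliceVal
      rw [dif_pos ha, hd₀, Function.update_self]
    have hxb : x.1 b = ↑(g e) := by
      show sliceVal κ A d₀ k₀ b = ↑(g e)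
      unfold sliceVal
      rw [dif_neg hb, hk₀, Function.update_self]
    have hone : indFun κ A a b g x = 1 := indFun_eq_one e hxa hxb
    have hzero : indFun κ A a b g' x = 0 := by
      apply indFun_eq_zero
      intro e' h1' h2'
      have hee : e' = e := OnePoint.coe_eq_coe.1 (h1'.symm.trans hxa)
      rw [hee] at h2'
      have : g e = g' e := OnePoint.coe_eq_coe.1 (hxb.symm.trans h2')
      exact hnegg this
    rw [h1, hzero] at hone
    exact one_ne_zero hone.symm
  exact le_antisymm upper lower

end
end

section
/- Let κ = ⟨κ₀ ≤ … ≤ κ_n⟩ be a weakly increasing tuple of infinite cardinals. Then the set of functions f : ∏_{i≤n} κᵢ → ℤ/2 with the property that, for every i ≤ n, f is the restriction to ∏_{i≤n} κᵢ of some continuous function D_{{i}} → ℤ/2, has cardinality at least 2^{κ₀}. -/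
set_option linter.unusedSectionVars false

open Cardinal Function OnePoint

noncomputable section

variable {ι : Type} [Fintype ι] [DecidableEq ι]

namespace Stmt4Aux

open Cardinal Function OnePoint

variable {n : ℕ}

/-- Choice of embeddings `κ 0 ↪ κ i`. -/
noncomputable def emb (κ : Fin (n + 1) → Cardinal) (hmono : Monotone κ) (i : Fin (n + 1)) :
    (κ 0).ord.ToType ↪ (κ i).ord.ToType := by
  have h : #(κ 0).ord.ToType ≤ #(κ i).ord.ToType := by
    simp [hmono (Fin.zero_le i)]
  exact (Cardinal.le_def _ _ |>.mp h).some

open scoped Classical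

/-- The diagonal indicator function twisted by `h`. -/
noncomputable def F (κ : Fin (n + 1) → Cardinal)
    (e : ∀ i, (κ 0).ord.ToType ↪ (κ i).ord.ToType)
    (h : (κ 0).ord.ToType → ZMod 2) (x : ∀ i, Alpha (κ i)) : ZMod 2 :=
  if H : ∃ a, ∀ j, x j = ((e j a : (κ j).ord.ToType) : Alpha (κ j)) then h H.choose else 0

lemma F_eq_of_forall (κ : Fin (n + 1) → Cardinal)
    (e : ∀ i, (κ 0).ord.ToType ↪ (κ i).ord.ToType)
    (h : (κ 0).ord.ToType → ZMod 2) (x : ∀ i, Alpha (κ i)) (a : (κ 0).ord.ToType)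
    (ha : ∀ j, x j = ((e j a : (κ j).ord.ToType) : Alpha (κ j))) :
    F κ e h x = h a := by
  have H : ∃ a, ∀ j, x j = ((e j a : (κ j).ord.ToType) : Alpha (κ j)) := ⟨a, ha⟩
  simp only [F]
  rw [dif_pos H]
  have h0 := (H.choose_spec 0).symm.trans (ha 0)
  have : H.choose = a := (e 0).injective (OnePoint.coe_injective h0)
  rw [this]

lemma F_eq_zero (κ : Fin (n + 1) → Cardinal)
    (e : ∀ i, (κ 0).ord.ToType ↪ (κ i).ord.ToType)
    (h : (κ 0).ord.ToType → ZMod 2) (x : ∀ i, Alpha (κ i))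
    (hne : ¬∃ a, ∀ j, x j = ((e j a : (κ j).ord.ToType) : Alpha (κ j))) :
    F κ e h x = 0 := by
  simp only [F]
  rw [dif_neg hne]

lemma isOpen_eq_coord (κ : Fin (n + 1) → Cardinal) (j : Fin (n + 1))
    (b : (κ j).ord.ToType) :
    IsOpen {y : ∀ i, Alpha (κ i) | y j = (b : Alpha (κ j))} := by
  have h1 : IsOpen ({(b : Alpha (κ j))} : Set (Alpha (κ j))) := by
    rw [← Set.image_singleton, OnePoint.isOpen_image_coe]
    exact isOpen_discrete _
  exact h1.preimage (continuous_apply (A := fun i : Fin (n + 1) => Alpha (κ i)) j)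

lemma isOpen_ne_coord (κ : Fin (n + 1) → Cardinal) (j : Fin (n + 1))
    (b : (κ j).ord.ToType) :
    IsOpen {y : ∀ i, Alpha (κ i) | y j ≠ (b : Alpha (κ j))} := by
  have h1 : IsOpen ({(b : Alpha (κ j))}ᶜ : Set (Alpha (κ j))) :=
    isClosed_singleton.isOpen_compl
  exact h1.preimage (continuous_apply (A := fun i : Fin (n + 1) => Alpha (κ i)) j)

lemma contF (κ : Fin (n + 1) → Cardinal)
    (e : ∀ i, (κ 0).ord.ToType ↪ (κ i).ord.ToType)
    (h : (κ 0).ord.ToType → ZMod 2) (i : Fin (n + 1)) :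
    Continuous (fun x : ↥(DD κ {i}) => F κ e h x.1) := by
  apply IsLocallyConstant.continuous
  rw [IsLocallyConstant.iff_exists_open]
  intro x
  have xi_ne : x.1 i ≠ ∞ := x.2 i (Finset.mem_singleton_self i)
  by_cases H : ∃ a, ∀ j, x.1 j = ((e j a : (κ j).ord.ToType) : Alpha (κ j))
  · obtain ⟨a, ha⟩ := H
    refine ⟨Subtype.val ⁻¹' (⋂ j, {y : ∀ k, Alpha (κ k) |
        y j = ((e j a : (κ j).ord.ToType) : Alpha (κ j))}), ?_, ?_, ?_⟩
    · exact (isOpen_iInter_of_finite (fun j : Fin (n + 1) =>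
        isOpen_eq_coord κ j (e j a))).preimage continuous_subtype_val
    · simpa using fun j => ha j
    · intro y hy
      have : y.1 = x.1 := by
        funext j
        have hyj : y.1 j = ((e j a : (κ j).ord.ToType) : Alpha (κ j)) := by
          simpa using Set.mem_iInter.mp hy j
        rw [hyj, ha j]
      simp [this]
  · have hx0 : F κ e h x.1 = 0 := F_eq_zero κ e h x.1 H
    by_cases H2 : ∃ a, x.1 i = ((e i a : (κ i).ord.ToType) : Alpha (κ i))
    · obtain ⟨a, ha⟩ := H2
      have : ∃ j, x.1 j ≠ ((e j a : (κ j).ord.ToType) : Alpha (κ j)) := by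
        by_contra hc
        push_neg at hc
        exact H ⟨a, hc⟩
      obtain ⟨j, hj⟩ := this
      refine ⟨Subtype.val ⁻¹' ({y : ∀ k, Alpha (κ k) |
          y i = ((e i a : (κ i).ord.ToType) : Alpha (κ i))} ∩
          {y : ∀ k, Alpha (κ k) | y j ≠ ((e j a : (κ j).ord.ToType) : Alpha (κ j))}),
        ?_, ?_, ?_⟩
      · exact ((isOpen_eq_coord κ i (e i a)).inter (isOpen_ne_coord κ j (e j a))).preimage
          continuous_subtype_val
      · exact ⟨ha, hj⟩
      · rintro y ⟨hyi, hyj⟩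
        have hy0 : F κ e h y.1 = 0 := by
          apply F_eq_zero
          rintro ⟨a', ha'⟩
          have : a' = a := (e i).injective (OnePoint.coe_injective ((ha' i).symm.trans hyi))
          exact hyj (this ▸ ha' j)
        rw [hy0, hx0]
    · obtain ⟨b, hb⟩ := Option.ne_none_iff_exists.mp xi_ne
      refine ⟨Subtype.val ⁻¹' {y : ∀ k, Alpha (κ k) | y i = (b : Alpha (κ i))}, ?_, ?_, ?_⟩
      · exact (isOpen_eq_coord κ i b).preimage continuous_subtype_val
      · exact hb.symm
      · intro y hy
        have hy0 : F κ e h y.1 = 0 := by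
          apply F_eq_zero
          rintro ⟨a', ha'⟩
          refine H2 ⟨a', ?_⟩
          rw [← hb]
          exact hy.symm.trans (ha' i)
        rw [hy0, hx0]

end Stmt4Aux

/-- The set of functions `∏ κᵢ → ℤ/2` which, for every `i`, are restrictions of a continuous
function on `D_{{i}}`, has cardinality at least `2 ^ κ₀`. -/
theorem stmt4 (n : ℕ) (κ : Fin (n + 1) → Cardinal) (hmono : Monotone κ)
    (hinf : ∀ i, ℵ₀ ≤ κ i) :
    2 ^ κ 0 ≤ #{f : ↥(DD κ Finset.univ) → ZMod 2 //
      ∀ i : Fin (n + 1), ∃ g : ↥(DD κ {i}) → ZMod 2, Continuous g ∧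
        f = res (Finset.subset_univ {i}) g} := by
  classical
  set e := Stmt4Aux.emb κ hmono with he
  set Φ : ((κ 0).ord.ToType → ZMod 2) → {f : ↥(DD κ Finset.univ) → ZMod 2 //
      ∀ i : Fin (n + 1), ∃ g : ↥(DD κ {i}) → ZMod 2, Continuous g ∧
        f = res (Finset.subset_univ {i}) g} :=
    fun h => ⟨fun x => Stmt4Aux.F κ e h x.1, fun i =>
      ⟨fun x => Stmt4Aux.F κ e h x.1, Stmt4Aux.contF κ e h i, rfl⟩⟩ with hΦ
  have hinj : Function.Injective Φ := by
    intro h1 h2 hEq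
    funext a
    have hmem : (fun j => ((e j a : (κ j).ord.ToType) : Alpha (κ j))) ∈ DD κ Finset.univ :=
      fun j _ => OnePoint.coe_ne_infty _
    have := congrFun (congrArg Subtype.val hEq) ⟨_, hmem⟩
    simp only [hΦ] at this
    rwa [Stmt4Aux.F_eq_of_forall κ e h1 _ a (fun j => rfl),
      Stmt4Aux.F_eq_of_forall κ e h2 _ a (fun j => rfl)] at this
  calc 2 ^ κ 0 = #((κ 0).ord.ToType → ZMod 2) := by
        rw [← Cardinal.power_def]
        congr 1
        · simp [Cardinal.mk_fintype]
        · simp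
    _ ≤ _ := Cardinal.mk_le_of_injective hinj

end
end

section
/- Let ⟨Y_i : i ≤ n⟩ be a k-Fubini partition of X(κ)⁻. Then for every A ⊆ {0,…,n} with |A| ≥ k+1 and every i ∉ A, one has D_A ∩ Y_i = D_{A∪{i}} ∩ Y_i. -/
set_option linter.unusedSectionVars false

open Cardinal Function OnePoint

noncomputable section

variable {ι : Type} [Fintype ι] [DecidableEq ι]

/-- For a `k`-Fubini partition `Y`, any `A` with `|A| ≥ k+1` and any `i ∉ A`:
`D_A ∩ Y_i = D_{A ∪ {i}} ∩ Y_i`. -/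
theorem stmt7 (n k : ℕ) (κ : Fin (n + 1) → Cardinal) (hinf : ∀ i, ℵ₀ ≤ κ i)
    (Y : Fin (n + 1) → Set (∀ i, Alpha (κ i))) (hY : IsFubini κ k Y)
    (A : Finset (Fin (n + 1))) (hA : k + 1 ≤ A.card)
    (i : Fin (n + 1)) (hi : i ∉ A) :
    DD κ A ∩ Y i = DD κ (insert i A) ∩ Y i := by
  apply Set.Subset.antisymm
  · rintro x ⟨hxA, hxY⟩
    classical
    refine ⟨?_, hxY⟩
    intro j hj
    rcases Finset.mem_insert.mp hj with rfl | hj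
    · -- need x j ≠ ∞; suppose not
      intro hinfty
      set B : Finset (Fin (n + 1)) := Finset.univ.filter (fun l => x l ≠ ∞) with hB
      have hAB : A ⊆ B := fun l hl => Finset.mem_filter.mpr ⟨Finset.mem_univ _, hxA l hl⟩
      have hBcard : k + 1 ≤ B.card := le_trans hA (Finset.card_le_card hAB)
      have hiB : j ∉ B := fun h => (Finset.mem_filter.mp h).2 hinfty
      have hxF : x ∈ FF κ B := by
        intro l
        constructor
        · intro hl; exact Finset.mem_filter.mpr ⟨Finset.mem_univ _, hl⟩
        · intro hl; exact (Finset.mem_filter.mp hl).2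
      have hAne : A.Nonempty := Finset.card_pos.mp (by omega)
      obtain ⟨a, ha⟩ := hAne
      have hxX : x ∈ Xminus κ := ⟨a, hxA a ha⟩
      have hsub := (hY.2.2 B hBcard).2
      have hmem : (⟨x, hxX⟩ : ↥(Xminus κ)) ∈
          {z : ↥(Xminus κ) | (z : ∀ l, Alpha (κ l)) ∈ FF κ B} := hxF
      have := interior_subset (hsub hmem)
      simp only [Set.mem_preimage, Set.mem_iUnion] at this
      obtain ⟨l, hlB, hxl⟩ := this
      have hlj : l ≠ j := fun h => hiB (h ▸ hlB)
      exact Set.disjoint_left.mp (hY.1 hlj) hxl hxY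
    · exact hxA j hj
  · rintro x ⟨hxA, hxY⟩
    exact ⟨fun l hl => hxA l (Finset.mem_insert_of_mem hl), hxY⟩

end
end

section
/- Let ⟨Y_i : i ≤ n⟩ be a k-Fubini partition of X(κ)⁻ and let f = ⟨f_A : A ⊆ {0,…,n}, |A| = k+2⟩ be a tuple with f_A ∈ C_A for each A. For each B ⊆ {0,…,n} with |B| = k+1, define g_B : D_B → ℤ/2 by: for x ∈ D_B ∩ Y_i, g_B(x) = f_{B∪{i}}(x) if i ∉ B, and g_B(x) = 0 if i ∈ B. Then each g_B is continuous, i.e., g_B ∈ C_B. Moreover, if f is a (k+1)-cocycle, then dg = f, where g = ⟨g_B⟩. -/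
set_option linter.unusedSectionVars false

open Cardinal Function OnePoint

noncomputable section

variable {ι : Type} [Fintype ι] [DecidableEq ι]

section aux

variable {κ : ι → Cardinal} {k : ℕ} {Y : ι → Set (∀ i, Alpha (κ i))}

lemma mem_Xminus_of_DD {B : Finset ι} (hB : B.Nonempty)
    {x : ∀ i, Alpha (κ i)} (hx : x ∈ DD κ B) : x ∈ Xminus κ := by
  obtain ⟨i, hi⟩ := hB
  exact ⟨i, hx i hi⟩

lemma exists_memY (hY : IsFubini κ k Y) {x : ∀ i, Alpha (κ i)} (hx : x ∈ Xminus κ) :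
    ∃ j, x ∈ Y j := by
  have := hY.2.1
  rw [← this] at hx
  exact Set.mem_iUnion.1 hx

lemma memY_unique (hY : IsFubini κ k Y) {x : ∀ i, Alpha (κ i)} {i j : ι}
    (hi : x ∈ Y i) (hj : x ∈ Y j) : i = j := by
  by_contra h
  exact Set.disjoint_left.mp (hY.1 h) hi hj

/-- If `x ∈ D_B` with `|B| ≥ k+1` and `x ∈ Y j`, then `x j ≠ ∞`. -/
lemma ne_infty_of_memY (hY : IsFubini κ k Y) {B : Finset ι} (hB : k + 1 ≤ B.card)
    {x : ∀ i, Alpha (κ i)} (hx : x ∈ DD κ B) {j : ι} (hj : x ∈ Y j) : x j ≠ ∞ := by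
  intro hinf
  classical
  set A : Finset ι := Finset.univ.filter (fun i => x i ≠ ∞) with hA
  have hBA : B ⊆ A := fun i hi => Finset.mem_filter.2 ⟨Finset.mem_univ _, hx i hi⟩
  have hcard : k + 1 ≤ A.card := le_trans hB (Finset.card_le_card hBA)
  have hBne : B.Nonempty := Finset.card_pos.1 (lt_of_lt_of_le (Nat.succ_pos k) hB)
  have hxX : x ∈ Xminus κ := mem_Xminus_of_DD hBne hx
  have hFF : (⟨x, hxX⟩ : ↥(Xminus κ)) ∈
      {y : ↥(Xminus κ) | (y : ∀ i, Alpha (κ i)) ∈ FF κ A} := by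
    intro i
    simp [hA]
  have hsub := (hY.2.2 A hcard).2 hFF
  have hmem := interior_subset hsub
  simp only [Set.mem_preimage, Set.mem_iUnion] at hmem
  obtain ⟨i, hiA, hiY⟩ := hmem
  have hij : i = j := memY_unique hY hiY hj
  subst hij
  have : x i ≠ ∞ := (Finset.mem_filter.1 hiA).2
  exact this hinf

lemma congr_cochain (f : Cochain κ) {B B' : Finset ι} (h : B = B')
    (x : ∀ i, Alpha (κ i)) (hx : x ∈ DD κ B) :
    f B ⟨x, hx⟩ = f B' ⟨x, h ▸ hx⟩ := by subst h; rfl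

end aux

/-- Given a `k`-Fubini partition `Y` and a tuple `f` of continuous functions over sets of size
`k+2`, the piecewise-defined `g` is a continuous cochain, and if `f` is a cocycle then `dg = f`. -/
theorem stmt8 (n k : ℕ) (κ : Fin (n + 1) → Cardinal) (hinf : ∀ i, ℵ₀ ≤ κ i)
    (Y : Fin (n + 1) → Set (∀ i, Alpha (κ i))) (hY : IsFubini κ k Y)
    (f : Cochain κ) (hf : IsCochain κ (k + 1) f)
    (g : Cochain κ)
    (hg : ∀ B : Finset (Fin (n + 1)), B.card = k + 1 →
      ∀ (x : ↥(DD κ B)) (i : Fin (n + 1)), (x : ∀ j, Alpha (κ j)) ∈ Y i →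
        (i ∈ B → g B x = 0) ∧
        (i ∉ B → ∀ hx : (x : ∀ j, Alpha (κ j)) ∈ DD κ (insert i B),
          g B x = f (insert i B) ⟨(x : ∀ j, Alpha (κ j)), hx⟩)) :
    IsCochain κ k g ∧
    ((∀ A : Finset (Fin (n + 1)), A.card = k + 3 → ∀ x, cb κ f A x = 0) →
      ∀ A : Finset (Fin (n + 1)), A.card = k + 2 → ∀ x, f A x = cb κ g A x) := by
  classical
  -- the canonical piece containing a point of some `D_B`, `B` nonempty
  have hBne : ∀ {B : Finset (Fin (n + 1))}, B.card = k + 1 → B.Nonempty := by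
    intro B hB
    exact Finset.card_pos.1 (by omega)
  constructor
  · -- continuity
    intro B hB
    rw [← IsLocallyConstant.iff_continuous]
    rw [IsLocallyConstant.iff_exists_open]
    intro x
    obtain ⟨j, hj⟩ := exists_memY hY (mem_Xminus_of_DD (hBne hB) x.2)
    by_cases hjB : j ∈ B
    · -- g is 0 on a neighborhood
      refine ⟨(⋃ i ∈ {i : Fin (n + 1) | i ∉ B}, (Subtype.val : ↥(DD κ B) → _) ⁻¹' Y i)ᶜ,
        ?_, ?_, ?_⟩
      · apply isOpen_compl_iff.2
        apply Set.Finite.isClosed_biUnion (Set.toFinite _)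
        intro i hi
        exact ((hY.2.2 B (le_of_eq hB.symm)).1 i hi).1
      · simp only [Set.mem_compl_iff, Set.mem_iUnion, not_exists]
        intro i hiB hiY
        have : i = j := memY_unique hY hiY hj
        subst this
        exact hiB hjB
      · intro y hy
        simp only [Set.mem_compl_iff, Set.mem_iUnion, not_exists] at hy
        obtain ⟨j', hj'⟩ := exists_memY hY (mem_Xminus_of_DD (hBne hB) y.2)
        have hj'B : j' ∈ B := by
          by_contra hcon
          exact hy j' hcon hj'
        rw [(hg B hB y j' hj').1 hj'B, (hg B hB x j hj).1 hjB]
    · -- g equals continuous f (insert j B) near x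
      have hxj : (x : ∀ i, Alpha (κ i)) j ≠ ∞ :=
        ne_infty_of_memY hY (le_of_eq hB.symm) x.2 hj
      have hxmem : (x : ∀ i, Alpha (κ i)) ∈ DD κ (insert j B) := by
        intro i hi
        rcases Finset.mem_insert.1 hi with h | h
        · subst h; exact hxj
        · exact x.2 i h
      have hcardins : (insert j B).card = (k + 1) + 1 := by
        rw [Finset.card_insert_of_notMem hjB, hB]
      have hfc : IsLocallyConstant (f (insert j B)) :=
        (IsLocallyConstant.iff_continuous _).2 (hf (insert j B) hcardins)
      obtain ⟨V, hVopen, hVmem, hVconst⟩ := hfc.exists_open ⟨_, hxmem⟩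
      obtain ⟨W, hWopen, hWV⟩ := isOpen_induced_iff.1 hVopen
      refine ⟨((Subtype.val : ↥(DD κ B) → _) ⁻¹' Y j) ∩
        ((Subtype.val : ↥(DD κ B) → _) ⁻¹' W), ?_, ?_, ?_⟩
      · exact ((hY.2.2 B (le_of_eq hB.symm)).1 j hjB).2.inter
          (hWopen.preimage continuous_subtype_val)
      · refine ⟨hj, ?_⟩
        have : (⟨_, hxmem⟩ : ↥(DD κ (insert j B))) ∈ Subtype.val ⁻¹' W := hWV ▸ hVmem
        exact this
      · rintro y ⟨hyY, hyW⟩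
        have hyj : (y : ∀ i, Alpha (κ i)) j ≠ ∞ :=
          ne_infty_of_memY hY (le_of_eq hB.symm) y.2 hyY
        have hymem : (y : ∀ i, Alpha (κ i)) ∈ DD κ (insert j B) := by
          intro i hi
          rcases Finset.mem_insert.1 hi with h | h
          · subst h; exact hyj
          · exact y.2 i h
        rw [(hg B hB y j hyY).2 hjB hymem, (hg B hB x j hj).2 hjB hxmem]
        have hyV : (⟨_, hymem⟩ : ↥(DD κ (insert j B))) ∈ V := hWV ▸ hyW
        exact hVconst _ hyV
  · -- coboundary
    intro hcoc A hA x
    have hAne : A.Nonempty := Finset.card_pos.1 (by omega)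
    obtain ⟨j, hj⟩ := exists_memY hY (mem_Xminus_of_DD hAne x.2)
    have hcard_erase : ∀ i ∈ A, (A.erase i).card = k + 1 := by
      intro i hi
      rw [Finset.card_erase_of_mem hi, hA]
      omega
    by_cases hjA : j ∈ A
    · -- only the `i = j` term survives, and it equals `f A x`
      simp only [cb, res]
      rw [Finset.sum_eq_single j]
      · have hjer : j ∉ A.erase j := Finset.notMem_erase j A
        have hxins : (x : ∀ i, Alpha (κ i)) ∈ DD κ (insert j (A.erase j)) := by
          rw [Finset.insert_erase hjA]; exact x.2
        erw [(hg (A.erase j) (hcard_erase j hjA) ⟨x.1, _⟩ j hj).2 hjer hxins]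
        rw [congr_cochain f (Finset.insert_erase hjA) x.1 hxins]
      · intro i hiA hij
        have : j ∈ A.erase i := Finset.mem_erase.2 ⟨(Ne.symm hij), hjA⟩
        exact (hg (A.erase i) (hcard_erase i hiA) ⟨x.1, _⟩ j hj).1 this
      · intro h; exact absurd hjA h
    · -- use the cocycle identity at `insert j A`
      have hxj : (x : ∀ i, Alpha (κ i)) j ≠ ∞ :=
        ne_infty_of_memY hY (by omega) x.2 hj
      have hxA' : (x : ∀ i, Alpha (κ i)) ∈ DD κ (insert j A) := by
        intro i hi
        rcases Finset.mem_insert.1 hi with h | h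
        · subst h; exact hxj
        · exact x.2 i h
      have hcardA' : (insert j A).card = k + 3 := by
        rw [Finset.card_insert_of_notMem hjA, hA]
      have hz := hcoc (insert j A) hcardA' ⟨_, hxA'⟩
      simp only [cb, res] at hz
      rw [Finset.sum_insert hjA] at hz
      have hjterm : f ((insert j A).erase j)
          ⟨x.1, fun i hi => hxA' i (Finset.erase_subset j _ hi)⟩ = f A x := by
        erw [congr_cochain f (Finset.erase_insert hjA)]
      rw [hjterm] at hz
      -- now compute cb κ g A x
      simp only [cb, res]
      have hterm : ∀ i ∈ A, g (A.erase i) ⟨x.1, fun i' hi' => x.2 i' (Finset.erase_subset i A hi')⟩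
          = f ((insert j A).erase i)
            ⟨x.1, fun i' hi' => hxA' i' (Finset.erase_subset i _ hi')⟩ := by
        intro i hiA
        have hjer : j ∉ A.erase i := fun h => hjA (Finset.mem_of_mem_erase h)
        have hxins : (x : ∀ i', Alpha (κ i')) ∈ DD κ (insert j (A.erase i)) := by
          intro i' hi'
          rcases Finset.mem_insert.1 hi' with h | h
          · subst h; exact hxj
          · exact x.2 i' (Finset.erase_subset i A h)
        erw [(hg (A.erase i) (hcard_erase i hiA) ⟨x.1, _⟩ j hj).2 hjer hxins]
        have hij : i ≠ j := fun h => hjA (h ▸ hiA)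
        have heq : insert j (A.erase i) = (insert j A).erase i := by
          rw [Finset.erase_insert_of_ne (Ne.symm hij)]
        rw [congr_cochain f heq]
      rw [Finset.sum_congr rfl hterm]
      -- from hz : f A x + Σ = 0, conclude in characteristic 2
      have := hz
      have h2 : f A x = -∑ i ∈ A, f ((insert j A).erase i)
          ⟨x.1, fun i' hi' => hxA' i' (Finset.erase_subset i _ hi')⟩ :=
        eq_neg_of_add_eq_zero_left this
      rw [h2, CharTwo.neg_eq]

end
end

section
/- Let κ = ⟨κ₀,…,κ_n⟩ be a tuple of infinite cardinals such that X(κ)⁻ admits a k-Fubini partition. Then H^{k+1}(X(κ)⁻, ℤ/2) = 0; that is, every (k+1)-cocycle for the Čech complex of X(κ)⁻ is a (k+1)-coboundary. -/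
set_option linter.unusedSectionVars false

open Cardinal Function OnePoint

noncomputable section

variable {ι : Type} [Fintype ι] [DecidableEq ι]

lemma my_DD_insert {κ : ι → Cardinal} {A : Finset ι} {x : ∀ i, Alpha (κ i)} {i : ι}
    (hx : x ∈ DD κ A) (hi : x i ≠ ∞) : x ∈ DD κ (insert i A) := by
  intro j hj
  rcases Finset.mem_insert.mp hj with h | h
  · subst h; exact hi
  · exact hx j h

lemma my_feq {κ : ι → Cardinal} (f : Cochain κ) {A B : Finset ι} (h : A = B)
    (x : ∀ i, Alpha (κ i)) (p : x ∈ DD κ A) (q : x ∈ DD κ B) :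
    f A ⟨x, p⟩ = f B ⟨x, q⟩ := by subst h; rfl

lemma my_cont_dite {X : Type*} [TopologicalSpace X] {p : X → Prop} [∀ x, Decidable (p x)]
    (hp : IsClopen {x | p x}) (F : ∀ x, p x → ZMod 2)
    (hF : Continuous fun x : {x // p x} => F x.1 x.2) :
    Continuous fun x => if h : p x then F x h else 0 := by
  classical
  rw [continuous_def]
  intro t _
  have hset : (fun x => if h : p x then F x h else 0) ⁻¹' t =
      (Subtype.val '' ((fun x : {x // p x} => F x.1 x.2) ⁻¹' t)) ∪
      (if (0 : ZMod 2) ∈ t then {x | p x}ᶜ else ∅) := by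
    ext x
    by_cases h : p x
    · simp only [Set.mem_preimage, dif_pos h, Set.mem_union, Set.mem_image]
      constructor
      · intro ht; exact Or.inl ⟨⟨x, h⟩, ht, rfl⟩
      · rintro (⟨⟨y, hy⟩, hyt, rfl⟩ | hrest)
        · exact hyt
        · exfalso; split at hrest
          · exact hrest h
          · exact hrest
    · simp only [Set.mem_preimage, dif_neg h, Set.mem_union, Set.mem_image]
      constructor
      · intro ht
        refine Or.inr ?_
        rw [if_pos ht]; exact h
      · rintro (⟨⟨y, hy⟩, hyt, rfl⟩ | hrest)
        · exact absurd hy h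
        · split at hrest
          · assumption
          · exact absurd hrest (Set.notMem_empty x)
  rw [hset]
  apply IsOpen.union
  · exact hp.isOpen.isOpenMap_subtype_val _ (hF.isOpen_preimage t (isOpen_discrete t))
  · split
    · exact hp.isClosed.isOpen_compl
    · exact isOpen_empty

open Classical in
/-- The candidate coboundary witness. -/
noncomputable def my_g (κ : ι → Cardinal) (Y : ι → Set (∀ i, Alpha (κ i)))
    (f : Cochain κ) : Cochain κ :=
  fun A' x => ∑ i : ι, if h : i ∉ A' ∧ x.1 ∈ Y i ∧ x.1 i ≠ ∞
    then f (insert i A') ⟨x.1, my_DD_insert x.2 h.2.2⟩ else 0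

/-- If `X(κ)⁻` admits a `k`-Fubini partition then `H^{k+1}(X(κ)⁻, ℤ/2) = 0`: every
`(k+1)`-cocycle is a `(k+1)`-coboundary. -/
theorem stmt9 (n k : ℕ) (κ : Fin (n + 1) → Cardinal) (hinf : ∀ i, ℵ₀ ≤ κ i)
    (hfub : ∃ Y : Fin (n + 1) → Set (∀ i, Alpha (κ i)), IsFubini κ k Y)
    (f : Cochain κ) (hf : IsCocycle κ (k + 1) f) :
    IsCoboundary κ (k + 1) f := by
  classical
  obtain ⟨Y, hdisj, hcover, hmain⟩ := hfub
  -- key: on `D_A` with `|A| ≥ k+1`, membership in `Y i` forces `x i ≠ ∞`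
  have key : ∀ A : Finset (Fin (n + 1)), k + 1 ≤ A.card →
      ∀ x : ∀ i, Alpha (κ i), x ∈ DD κ A → ∀ i, x ∈ Y i → x i ≠ ∞ := by
    intro A hA x hx i hxY
    set A0 : Finset (Fin (n + 1)) := Finset.univ.filter (fun j => x j ≠ ∞) with hA0
    have hsub : A ⊆ A0 := fun j hj =>
      Finset.mem_filter.mpr ⟨Finset.mem_univ _, hx j hj⟩
    have hcard : k + 1 ≤ A0.card := le_trans hA (Finset.card_le_card hsub)
    have hxX : x ∈ Xminus κ := by
      obtain ⟨j, hj⟩ := Finset.card_pos.mp (lt_of_lt_of_le (Nat.succ_pos k) hA)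
      exact ⟨j, hx j hj⟩
    have hFF : x ∈ FF κ A0 := by
      intro j; simp [hA0]
    obtain ⟨-, hint⟩ := hmain A0 hcard
    have hx2 : (⟨x, hxX⟩ : ↥(Xminus κ)) ∈
        interior ((Subtype.val : ↥(Xminus κ) → _) ⁻¹' ⋃ i ∈ A0, Y i) := hint hFF
    have hx3' := interior_subset hx2
    have hx3 : x ∈ ⋃ j ∈ A0, Y j := hx3'
    obtain ⟨j, hjA0, hxj⟩ := Set.mem_iUnion₂.mp hx3
    have hij : i = j := by
      by_contra hne
      exact Set.disjoint_left.mp (hdisj hne) hxY hxj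
    subst hij
    exact (Finset.mem_filter.mp hjA0).2
  refine ⟨my_g κ Y f, ?_, ?_⟩
  · -- continuity of the witness on faces of size k+1
    intro A' hcard'
    have hc : A'.card = k + 1 := hcard'
    apply continuous_finset_sum
    intro i _
    by_cases hiA : i ∈ A'
    · have : (fun x : ↥(DD κ A') =>
          if h : i ∉ A' ∧ x.1 ∈ Y i ∧ x.1 i ≠ ∞
          then f (insert i A') ⟨x.1, my_DD_insert x.2 h.2.2⟩ else 0) = fun _ => 0 := by
        funext x; exact dif_neg fun h => h.1 hiA
      rw [this]; exact continuous_const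
    · apply my_cont_dite
      · have hEq : {x : ↥(DD κ A') | i ∉ A' ∧ x.1 ∈ Y i ∧ x.1 i ≠ ∞} =
            (Subtype.val : ↥(DD κ A') → _) ⁻¹' Y i := by
          ext x
          constructor
          · intro h; exact h.2.1
          · intro h; exact ⟨hiA, h, key A' (le_of_eq hc.symm) x.1 x.2 i h⟩
        rw [hEq]
        exact ((hmain A' (le_of_eq hc.symm)).1 i hiA)
      · have hcont : Continuous (f (insert i A')) :=
          hf.1 (insert i A') (by rw [Finset.card_insert_of_notMem hiA, hc])
        exact hcont.comp (Continuous.subtype_mk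
          (continuous_subtype_val.comp continuous_subtype_val) _)
  · -- the coboundary identity
    intro A hA x
    have hA2 : A.card = k + 2 := hA
    have hxX : x.1 ∈ Xminus κ := by
      obtain ⟨j, hj⟩ := Finset.card_pos.mp (by omega : 0 < A.card)
      exact ⟨j, x.2 j hj⟩
    obtain ⟨i0, hi0⟩ : ∃ i, x.1 ∈ Y i := by
      have h := hxX
      rw [← hcover] at h
      exact Set.mem_iUnion.mp h
    have hi0inf : x.1 i0 ≠ ∞ := key A (by omega) x.1 x.2 i0 hi0
    have huniq : ∀ i, x.1 ∈ Y i → i = i0 := by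
      intro i hi
      by_contra hne
      exact Set.disjoint_left.mp (hdisj hne) hi hi0
    -- value of the witness on faces
    have hval : ∀ (B : Finset (Fin (n + 1))) (p : x.1 ∈ DD κ B),
        my_g κ Y f B ⟨x.1, p⟩ =
          if _ : i0 ∉ B then f (insert i0 B) ⟨x.1, my_DD_insert p hi0inf⟩ else 0 := by
      intro B p
      unfold my_g
      rw [Fintype.sum_eq_single i0 (fun i hi => dif_neg fun h => hi (huniq i h.2.1))]
      by_cases h : i0 ∉ B
      · rw [dif_pos ⟨h, hi0, hi0inf⟩, dif_pos h]
      · rw [dif_neg fun hh => h hh.1, dif_neg h]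
    show f A x = cb κ (my_g κ Y f) A x
    unfold cb res
    by_cases hi0A : i0 ∈ A
    · rw [Finset.sum_eq_single_of_mem i0 hi0A (fun j hj hne => by
        erw [hval]
        exact dif_neg (fun hh => hh (Finset.mem_erase.mpr ⟨fun h => hne h.symm, hi0A⟩)))]
      erw [hval, dif_pos (Finset.notMem_erase i0 A)]
      exact (my_feq f (Finset.insert_erase hi0A) x.1 _ x.2).symm
    · have hz := hf.2 (insert i0 A)
        (by rw [Finset.card_insert_of_notMem hi0A, hA2]) ⟨x.1, my_DD_insert x.2 hi0inf⟩
      unfold cb res at hz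
      rw [Finset.sum_insert hi0A] at hz
      have hfirst : f ((insert i0 A).erase i0)
          ⟨x.1, fun i hi => (my_DD_insert x.2 hi0inf) i (Finset.erase_subset _ _ hi)⟩
          = f A ⟨x.1, x.2⟩ :=
        my_feq f (Finset.erase_insert hi0A) x.1 _ x.2
      have h2 : ∀ a b : ZMod 2, a + b = 0 → a = b := by decide
      have hgoal : f A ⟨x.1, x.2⟩ =
          ∑ j ∈ A, f ((insert i0 A).erase j)
            ⟨x.1, fun i hi => (my_DD_insert x.2 hi0inf) i (Finset.erase_subset _ _ hi)⟩ := by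
        rw [← hfirst]
        exact h2 _ _ hz
      rw [hgoal]
      apply Finset.sum_congr rfl
      intro j hj
      have hne : i0 ≠ j := fun h => hi0A (h ▸ hj)
      erw [hval, dif_pos (fun hh => hi0A (Finset.mem_of_mem_erase hh))]
      exact my_feq f (Finset.erase_insert_of_ne hne) x.1 _ _

end
end

section
/- Let κ = ⟨κ₀ ≤ … ≤ κ_n⟩ be a weakly increasing tuple of infinite cardinals and suppose there exists i₀ ≤ n with κ_{i₀} < ℵ_{i₀}. Then X(κ)⁻ admits an (n−1)-Fubini partition; equivalently, the product ∏_{i≤n} κᵢ can be partitioned into sets Y₀,…,Y_n such that for each j ≤ n and each choice of values x_i ∈ κ_i for all i ≠ j, only finitely many x_j ∈ κ_j yield a tuple lying in Y_j. -/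
set_option linter.unusedSectionVars false

open Cardinal Function OnePoint

noncomputable section

variable {ι : Type} [Fintype ι] [DecidableEq ι]

section MyAux

section SEG
lemma mk_Iic_toType (c : Cardinal) (ξ : c.ord.ToType) :
    #{η : c.ord.ToType | η ≤ ξ} ≤ #(Set.Iio ξ) + 1 := by
  have h1 : {η : c.ord.ToType | η ≤ ξ} = insert ξ (Set.Iio ξ) := by
    ext η; simp [le_iff_lt_or_eq, or_comm, Set.Iio]
  rw [h1]
  exact Cardinal.mk_insert_le

lemma seg_finite (ξ : (aleph 0).ord.ToType) : {η : (aleph 0).ord.ToType | η ≤ ξ}.Finite := by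
  rw [← Cardinal.lt_aleph0_iff_set_finite]
  have h2 := (Cardinal.mk_Iio_ord_toType ξ).trans_eq Cardinal.aleph_zero
  exact (mk_Iic_toType _ ξ).trans_lt (Cardinal.add_lt_aleph0 h2 Cardinal.one_lt_aleph0)

lemma seg_le (m : ℕ) (ξ : (aleph (m+1 : ℕ)).ord.ToType) :
    #{η : (aleph (m+1:ℕ)).ord.ToType | η ≤ ξ} ≤ aleph m := by
  have hsucc : (aleph (m+1 : ℕ) : Cardinal) = Order.succ (aleph (m:ℕ)) := by
    rw [← Cardinal.aleph_succ]
    norm_num [Nat.cast_succ]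
  have h2 := (Cardinal.mk_Iio_ord_toType ξ).trans_eq hsucc
  rw [Order.lt_succ_iff] at h2
  refine (mk_Iic_toType _ ξ).trans ?_
  calc #(Set.Iio ξ) + 1 ≤ aleph m + 1 := by gcongr
    _ = aleph m := Cardinal.add_one_eq (Cardinal.aleph0_le_aleph _)
end SEG

section TCAST
def tcast {ι : Type} {O : Type} [LE O] (T : ι → Type) (u : ∀ i, T i → O) (ξ : O) {a b : ι}
    (h : a = b) (w : {v : T a // u a v ≤ ξ}) : {v : T b // u b v ≤ ξ} :=
  match h with | rfl => w

lemma tcast_refl {ι : Type} {O : Type} [LE O] (T : ι → Type) (u : ∀ i, T i → O) (ξ : O) {a : ι}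
    (h : a = a) (w : {v : T a // u a v ≤ ξ}) : tcast T u ξ h w = w := rfl

def auxPt {ι : Type} [DecidableEq ι] {O : Type} [LE O] (T : ι → Type) (u : ∀ i, T i → O) (ξ : O)
    (js j : ι) (x : ∀ i, T i) (hb : ∀ i, i ≠ j → u i (x i) ≤ ξ)
    (w : {v : T j // u j v ≤ ξ}) :
    ∀ i : {i : ι // i ≠ js}, {v : T i.1 // u i.1 v ≤ ξ} :=
  fun i => if h : (i : ι) = j then tcast T u ξ h.symm w else ⟨x i.1, hb i.1 h⟩

lemma auxPt_update {ι : Type} [DecidableEq ι] {O : Type} [LE O] (T : ι → Type)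
    (u : ∀ i, T i → O) (ξ : O) (js j : ι) (hne : j ≠ js) (x : ∀ i, T i)
    (hb : ∀ i, i ≠ j → u i (x i) ≤ ξ) (w w' : {v : T j // u j v ≤ ξ}) :
    Function.update (auxPt T u ξ js j x hb w) ⟨j, hne⟩ w' = auxPt T u ξ js j x hb w' := by
  funext i
  by_cases h : i = (⟨j, hne⟩ : {i : ι // i ≠ js})
  · subst h
    rw [Function.update_self]
    unfold auxPt
    rw [dif_pos rfl, tcast_refl]
  · rw [Function.update_of_ne h]
    unfold auxPt
    have h1 : (i : ι) ≠ j := fun hh => h (Subtype.ext hh)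
    rw [dif_neg h1, dif_neg h1]

lemma auxPt_eq_full {ι : Type} [DecidableEq ι] {O : Type} [LE O] (T : ι → Type)
    (u : ∀ i, T i → O) (ξ : O) (js j : ι) (x : ∀ i, T i)
    (hb : ∀ i, i ≠ j → u i (x i) ≤ ξ) (hv : u j (x j) ≤ ξ)
    (hball : ∀ i : {i : ι // i ≠ js}, u i.1 (x i.1) ≤ ξ) :
    auxPt T u ξ js j x hb ⟨x j, hv⟩ = fun i => ⟨x i.1, hball i⟩ := by
  funext i
  unfold auxPt
  by_cases h : (i : ι) = j
  · obtain ⟨i1, hi⟩ := i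
    dsimp at h
    subst h
    rw [dif_pos rfl, tcast_refl]
  · rw [dif_neg h]

lemma auxPt_x_irrel {ι : Type} [DecidableEq ι] {O : Type} [LE O] (T : ι → Type)
    (u : ∀ i, T i → O) (ξ : O) (js j : ι) (x x' : ∀ i, T i)
    (hxx : ∀ i, i ≠ j → x i = x' i)
    (hb : ∀ i, i ≠ j → u i (x i) ≤ ξ) (hb' : ∀ i, i ≠ j → u i (x' i) ≤ ξ)
    (w : {v : T j // u j v ≤ ξ}) :
    auxPt T u ξ js j x hb w = auxPt T u ξ js j x' hb' w := by
  funext i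
  unfold auxPt
  by_cases h : (i : ι) = j
  · rw [dif_pos h, dif_pos h]
  · rw [dif_neg h, dif_neg h]
    exact Subtype.ext (hxx i.1 h)
end TCAST

lemma kur : ∀ (m : ℕ) (ι : Type) [DecidableEq ι] [Fintype ι],
    m + 2 ≤ Fintype.card ι → ∀ (T : ι → Type) (u : ∀ i, T i ↪ (aleph.{0} (m:ℕ)).ord.ToType),
    ∃ F : ∀ j : ι, ((∀ i, T i) → Set (T j)),
      (∀ j x v, F j (Function.update x j v) = F j x) ∧
      (∀ j x, (F j x).Finite) ∧ (∀ x, ∃ j, x j ∈ F j x) := by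
  intro m
  induction m with
  | zero =>
    intro ι _ _ hcard T u
    have hne : Nonempty ι := Fintype.card_pos_iff.mp (by omega)
    refine ⟨fun j x => {v | ∃ i, i ≠ j ∧ u j v ≤ u i (x i)}, ?_, ?_, ?_⟩
    · intro j x v
      ext w
      simp only [Set.mem_setOf_eq]
      constructor
      · rintro ⟨i, hij, hle⟩
        rw [Function.update_of_ne hij] at hle
        exact ⟨i, hij, hle⟩
      · rintro ⟨i, hij, hle⟩
        refine ⟨i, hij, ?_⟩
        rwa [Function.update_of_ne hij]
    · intro j x
      have hsub : {v | ∃ i, i ≠ j ∧ u j v ≤ u i (x i)} ⊆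
          ⋃ i : ι, (u j) ⁻¹' {η | η ≤ u i (x i)} := by
        rintro v ⟨i, _, hle⟩
        exact Set.mem_iUnion.mpr ⟨i, hle⟩
      refine Set.Finite.subset ?_ hsub
      refine Set.finite_iUnion fun i => ?_
      exact (seg_finite (u i (x i))).preimage ((u j).injective.injOn)
    · intro x
      obtain ⟨is, _, hmax⟩ := Finset.exists_max_image Finset.univ (fun i => u i (x i))
        ⟨Classical.arbitrary ι, Finset.mem_univ _⟩
      obtain ⟨j, hj⟩ := Fintype.exists_ne_of_one_lt_card (by omega) is
      exact ⟨j, is, Ne.symm hj, hmax j (Finset.mem_univ _)⟩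
  | succ m IH =>
    intro ι _ _ hcard T u
    classical
    have hneι : Nonempty ι := Fintype.card_pos_iff.mp (by omega)
    set O : Type := (aleph.{0} ((m+1 : ℕ) : ℕ)).ord.ToType with hO
    have he : ∀ ξ : O, Nonempty ({η : O // η ≤ ξ} ↪ (aleph.{0} (m:ℕ)).ord.ToType) := by
      intro ξ
      rw [← Cardinal.le_def]
      refine le_trans (seg_le m ξ) ?_
      rw [Cardinal.mk_toType, Cardinal.card_ord]
    have e : ∀ ξ : O, ({η : O // η ≤ ξ} ↪ (aleph.{0} (m:ℕ)).ord.ToType) :=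
      fun ξ => (he ξ).some
    have hcard' : ∀ js : ι, m + 2 ≤ Fintype.card {i : ι // i ≠ js} := by
      intro js
      have h1 : Fintype.card {i : ι // i ≠ js} = Fintype.card ι - 1 := by
        rw [Fintype.card_subtype_compl, Fintype.card_subtype_eq]
      omega
    set uu : ∀ i, T i → O := fun i v => u i v with huudef
    have huu : ∀ i, Function.Injective (uu i) := by
      intro i a b hab
      exact (u i).injective (by simpa [huudef] using hab)
    have hIH : ∀ (js : ι) (ξ : O),
        ∃ F : ∀ j : {i : ι // i ≠ js},
          ((∀ i : {i : ι // i ≠ js}, {v : T i.1 // uu i.1 v ≤ ξ}) →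
            Set {v : T j.1 // uu j.1 v ≤ ξ}),
          (∀ j x v, F j (Function.update x j v) = F j x) ∧
          (∀ j x, (F j x).Finite) ∧ (∀ x, ∃ j, x j ∈ F j x) := by
      intro js ξ
      refine IH _ (hcard' js) _ (fun i => ⟨fun w => e ξ ⟨uu i.1 w.1, w.2⟩, ?_⟩)
      intro a b hab
      have h1 := (e ξ).injective hab
      have h2 : uu i.1 a.1 = uu i.1 b.1 := congrArg Subtype.val h1
      exact Subtype.ext (huu i.1 h2)
    choose F' hinv' hfin' hcov' using hIH
    refine ⟨fun j x => {v | ∃ (js : ι) (hne : js ≠ j) (ξ : O) (_ : ξ = uu js (x js))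
        (hb : ∀ i, i ≠ j → uu i (x i) ≤ ξ) (hv : uu j v ≤ ξ),
        (⟨v, hv⟩ : {w : T j // uu j w ≤ ξ}) ∈
          F' js ξ ⟨j, Ne.symm hne⟩ (auxPt T uu ξ js j x hb ⟨v, hv⟩)}, ?_, ?_, ?_⟩
    · -- invariance
      intro j x v
      ext w
      simp only [Set.mem_setOf_eq]
      constructor
      · rintro ⟨js, hne, ξ, hξ, hb, hv, hmem⟩
        rw [Function.update_of_ne hne] at hξ
        have hb' : ∀ i, i ≠ j → uu i (x i) ≤ ξ := by
          intro i hi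
          have := hb i hi
          rwa [Function.update_of_ne hi] at this
        refine ⟨js, hne, ξ, hξ, hb', hv, ?_⟩
        rwa [auxPt_x_irrel T uu ξ js j
          (Function.update x j v) x (fun i hi => Function.update_of_ne hi _ _) hb hb'] at hmem
      · rintro ⟨js, hne, ξ, hξ, hb, hv, hmem⟩
        have hb' : ∀ i, i ≠ j → uu i (Function.update x j v i) ≤ ξ := by
          intro i hi
          rw [Function.update_of_ne hi]
          exact hb i hi
        refine ⟨js, hne, ξ, by rw [Function.update_of_ne hne]; exact hξ, hb', hv, ?_⟩
        rwa [auxPt_x_irrel T uu ξ js j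
          (Function.update x j v) x (fun i hi => Function.update_of_ne hi _ _) hb' hb]
    · -- finiteness
      intro j x
      have hsub : {v | ∃ (js : ι) (hne : js ≠ j) (ξ : O) (_ : ξ = uu js (x js))
          (hb : ∀ i, i ≠ j → uu i (x i) ≤ ξ) (hv : uu j v ≤ ξ),
          (⟨v, hv⟩ : {w : T j // uu j w ≤ ξ}) ∈
            F' js ξ ⟨j, Ne.symm hne⟩ (auxPt T uu ξ js j x hb ⟨v, hv⟩)} ⊆
          ⋃ js : ι, {v | ∃ (hne : js ≠ j)
          (hb : ∀ i, i ≠ j → uu i (x i) ≤ uu js (x js)) (hv : uu j v ≤ uu js (x js)),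
          (⟨v, hv⟩ : {w : T j // uu j w ≤ uu js (x js)}) ∈
            F' js (uu js (x js)) ⟨j, Ne.symm hne⟩
              (auxPt T uu (uu js (x js)) js j x hb ⟨v, hv⟩)} := by
        rintro v ⟨js, hne, ξ, hξ, hb, hv, hmem⟩
        subst hξ
        exact Set.mem_iUnion.mpr ⟨js, hne, hb, hv, hmem⟩
      refine Set.Finite.subset (Set.finite_iUnion fun js => ?_) hsub
      set S := {v | ∃ (hne : js ≠ j)
          (hb : ∀ i, i ≠ j → uu i (x i) ≤ uu js (x js)) (hv : uu j v ≤ uu js (x js)),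
          (⟨v, hv⟩ : {w : T j // uu j w ≤ uu js (x js)}) ∈
            F' js (uu js (x js)) ⟨j, Ne.symm hne⟩
              (auxPt T uu (uu js (x js)) js j x hb ⟨v, hv⟩)} with hS
      rcases Set.eq_empty_or_nonempty S with hE | ⟨v0, hv0⟩
      · rw [hE]; exact Set.finite_empty
      obtain ⟨hne, hb, hv0le, _⟩ := hv0
      have hkey : S ⊆ Subtype.val '' (F' js (uu js (x js)) ⟨j, Ne.symm hne⟩
          (auxPt T uu (uu js (x js)) js j x hb ⟨v0, hv0le⟩)) := by
        rintro v ⟨hne', hb', hvle, hmem⟩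
        refine ⟨⟨v, hvle⟩, ?_, rfl⟩
        have h1 : auxPt T uu (uu js (x js)) js j x hb' ⟨v, hvle⟩ =
            Function.update (auxPt T uu (uu js (x js)) js j x hb ⟨v0, hv0le⟩)
              ⟨j, Ne.symm hne⟩ ⟨v, hvle⟩ := by
          rw [auxPt_update]
        rw [h1] at hmem
        rwa [hinv'] at hmem
      exact Set.Finite.subset (Set.Finite.image _ (hfin' js (uu js (x js)) ⟨j, Ne.symm hne⟩
        (auxPt T uu (uu js (x js)) js j x hb ⟨v0, hv0le⟩))) hkey
    · -- coverage
      intro x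
      obtain ⟨js, _, hmax⟩ := Finset.exists_max_image Finset.univ (fun i => uu i (x i))
        ⟨Classical.arbitrary ι, Finset.mem_univ _⟩
      set ξ := uu js (x js) with hξ
      have hball : ∀ i : {i : ι // i ≠ js}, uu i.1 (x i.1) ≤ ξ :=
        fun i => hmax i.1 (Finset.mem_univ _)
      obtain ⟨jj, hjj⟩ := hcov' js ξ (fun i => ⟨x i.1, hball i⟩)
      refine ⟨jj.1, js, Ne.symm jj.2, ξ, hξ, fun i _ => hmax i (Finset.mem_univ _),
        hmax jj.1 (Finset.mem_univ _), ?_⟩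
      have h1 : auxPt T uu ξ js jj.1 x (fun i _ => hmax i (Finset.mem_univ _))
          ⟨x jj.1, hmax jj.1 (Finset.mem_univ _)⟩ = fun i => ⟨x i.1, hball i⟩ :=
        auxPt_eq_full T uu ξ js jj.1 x _ _ hball
      rw [h1]
      exact hjj

lemma partZ (n : ℕ) (κ : Fin (n + 1) → Cardinal.{0}) (hmono : Monotone κ)
    (hinf : ∀ i, ℵ₀ ≤ κ i)
    (hsmall : ∃ i : Fin (n + 1), κ i < Cardinal.aleph (i : ℕ)) :
    ∃ Z : Fin (n + 1) → Set (∀ i, (κ i).ord.ToType),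
      Pairwise (Disjoint on Z) ∧ (⋃ j, Z j) = Set.univ ∧
      ∀ (j : Fin (n + 1)) (x : ∀ i, (κ i).ord.ToType),
        {v : (κ j).ord.ToType | Function.update x j v ∈ Z j}.Finite := by
  classical
  obtain ⟨i₀, hi₀⟩ := hsmall
  obtain ⟨m, hm⟩ : ∃ m : ℕ, (i₀ : ℕ) = m + 1 := by
    rcases Nat.eq_zero_or_pos (i₀ : ℕ) with h0 | h0
    · exfalso
      rw [h0] at hi₀
      rw [show ((0:ℕ):Ordinal) = 0 by norm_num, Cardinal.aleph_zero] at hi₀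
      exact absurd (hinf i₀) (not_le.mpr hi₀)
    · exact ⟨(i₀:ℕ) - 1, by omega⟩
  have hle : m + 2 ≤ n + 1 := by have := i₀.2; omega
  set emb : Fin (m + 2) → Fin (n + 1) := Fin.castLE hle with hemb
  have hsm : ∀ k : Fin (m + 2), κ (emb k) ≤ aleph (m : ℕ) := by
    intro k
    have h1 : κ (emb k) ≤ κ i₀ := by
      apply hmono
      have : (emb k : ℕ) = (k : ℕ) := rfl
      have hk := k.2
      show (emb k : ℕ) ≤ (i₀ : ℕ)
      omega
    have h2 : κ i₀ < Order.succ (aleph (m:ℕ)) := by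
      refine lt_of_lt_of_eq hi₀ ?_
      rw [hm, ← Cardinal.aleph_succ]
      norm_num [Nat.cast_succ]
    exact h1.trans (Order.lt_succ_iff.mp h2)
  have hu : ∀ k : Fin (m + 2), Nonempty ((κ (emb k)).ord.ToType ↪ (aleph.{0} (m:ℕ)).ord.ToType) := by
    intro k
    rw [← Cardinal.le_def, Cardinal.mk_toType, Cardinal.mk_toType,
      Cardinal.card_ord, Cardinal.card_ord]
    exact hsm k
  have u : ∀ k : Fin (m + 2), ((κ (emb k)).ord.ToType ↪ (aleph.{0} (m:ℕ)).ord.ToType) :=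
    fun k => (hu k).some
  obtain ⟨F, hFinv, hFfin, hFcov⟩ := kur m (Fin (m + 2)) (by simp) (fun k => (κ (emb k)).ord.ToType) u
  set G : ∀ j : Fin (n + 1), (∀ i, (κ i).ord.ToType) → Set ((κ j).ord.ToType) :=
    fun j x => if hj : (j : ℕ) < m + 2 then F ⟨j.1, hj⟩ (fun k => x (emb k)) else ∅ with hG
  have hGinv : ∀ j x v, G j (Function.update x j v) = G j x := by
    intro j x v
    by_cases hj : (j : ℕ) < m + 2
    · have hpt : (fun k => Function.update x j v (emb k)) =
          Function.update (fun k => x (emb k)) ⟨j.1, hj⟩ v := by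
        funext k
        by_cases hk : k = (⟨j.1, hj⟩ : Fin (m + 2))
        · subst hk
          rw [Function.update_self]
          show Function.update x j v j = v
          rw [Function.update_self]
        · have hne : emb k ≠ j := by
            intro hh
            apply hk
            apply Fin.ext
            have : (emb k : ℕ) = (k : ℕ) := rfl
            have h2 : (emb k : ℕ) = (j : ℕ) := by rw [hh]
            simp only [Fin.val_mk]
            omega
          rw [Function.update_of_ne hne, Function.update_of_ne hk]
      show dite _ _ _ = dite _ _ _
      rw [dif_pos hj, dif_pos hj, hpt, hFinv]
    · show dite _ _ _ = dite _ _ _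
      rw [dif_neg hj, dif_neg hj]
  have hGfin : ∀ j x, (G j x).Finite := by
    intro j x
    by_cases hj : (j : ℕ) < m + 2
    · show (dite _ _ _ : Set _).Finite
      rw [dif_pos hj]; exact hFfin _ _
    · show (dite _ _ _ : Set _).Finite
      rw [dif_neg hj]; exact Set.finite_empty
  have hGcov : ∀ x, ∃ j, x j ∈ G j x := by
    intro x
    obtain ⟨k, hk⟩ := hFcov (fun k => x (emb k))
    refine ⟨emb k, ?_⟩
    have hj : ((emb k : Fin (n+1)) : ℕ) < m + 2 := k.2
    show x (emb k) ∈ dite _ _ _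
    rw [dif_pos hj]
    exact hk
  refine ⟨fun j => {x | x j ∈ G j x ∧ ∀ k, k < j → x k ∉ G k x}, ?_, ?_, ?_⟩
  · intro a b hab
    refine Set.disjoint_left.mpr ?_
    rintro x ⟨ha1, ha2⟩ ⟨hb1, hb2⟩
    rcases lt_or_gt_of_ne hab with h | h
    · exact hb2 a h ha1
    · exact ha2 b h hb1
  · ext x
    simp only [Set.mem_iUnion, Set.mem_univ, iff_true]
    have hne : (Finset.univ.filter (fun j => x j ∈ G j x)).Nonempty := by
      obtain ⟨j, hj⟩ := hGcov x
      exact ⟨j, Finset.mem_filter.mpr ⟨Finset.mem_univ _, hj⟩⟩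
    set j := (Finset.univ.filter (fun j => x j ∈ G j x)).min' hne with hj
    refine ⟨j, (Finset.mem_filter.mp ((Finset.univ.filter _).min'_mem hne)).2, ?_⟩
    intro k hk hmem
    have : j ≤ k := Finset.min'_le _ k (Finset.mem_filter.mpr ⟨Finset.mem_univ k, hmem⟩)
    exact absurd hk (not_lt.mpr this)
  · intro j x
    have hsub : {v | Function.update x j v ∈
        {x | x j ∈ G j x ∧ ∀ k, k < j → x k ∉ G k x}} ⊆ G j x := by
      rintro v ⟨h1, _⟩
      rw [Function.update_self, hGinv j x v] at h1
      exact h1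
    exact Set.Finite.subset (hGfin j x) hsub


noncomputable def untop0 {X : Type} (a : OnePoint X) (h : a ≠ ∞) : X :=
  (OnePoint.ne_infty_iff_exists.mp h).choose

lemma untop0_spec {X : Type} (a : OnePoint X) (h : a ≠ ∞) : ↑(untop0 a h) = a :=
  (OnePoint.ne_infty_iff_exists.mp h).choose_spec

lemma untop0_coe {X : Type} (v : X) (h : (v : OnePoint X) ≠ ∞) : untop0 (↑v) h = v :=
  OnePoint.coe_injective (untop0_spec _ h)

lemma untop0_congr {X : Type} (a b : OnePoint X) (h : a ≠ ∞) (h' : b ≠ ∞) (hab : a = b) :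
    untop0 a h = untop0 b h' := by subst hab; rfl

lemma singleton_open {X : Type} [TopologicalSpace X] [DiscreteTopology X]
    (a : OnePoint X) (h : a ≠ ∞) : IsOpen {a} := by
  rw [OnePoint.isOpen_iff_of_notMem (fun he => h (Set.mem_singleton_iff.mp he).symm)]
  exact isOpen_discrete _

lemma cofin_open {X : Type} [TopologicalSpace X] [DiscreteTopology X]
    (G : Set X) (hG : G.Finite) : IsOpen (((↑) '' G : Set (OnePoint X))ᶜ) := by
  rw [OnePoint.isOpen_iff_of_mem (Set.mem_compl OnePoint.infty_notMem_image_coe)]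
  have h1 : ((↑) ⁻¹' (((↑) '' G : Set (OnePoint X))ᶜ) : Set X)ᶜ = G := by
    rw [Set.preimage_compl, compl_compl, Set.preimage_image_eq _ OnePoint.coe_injective]
  rw [h1]
  exact ⟨isClosed_discrete _, hG.isCompact⟩

lemma pt_open {κ : ι → Cardinal} (p : ∀ i, Alpha (κ i)) (hp : ∀ i, p i ≠ ∞) :
    IsOpen {x : ∀ i, Alpha (κ i) | ∀ i, x i = p i} := by
  have : {x : ∀ i, Alpha (κ i) | ∀ i, x i = p i} =
      ⋂ i, (fun x : ∀ i, Alpha (κ i) => x i) ⁻¹' {p i} := by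
    ext x; simp [Set.mem_iInter]
  rw [this]
  exact isOpen_iInter_of_finite fun i =>
    (singleton_open _ (hp i)).preimage (continuous_apply i)

lemma nbhd_open {κ : ι → Cardinal} (p : ∀ i, Alpha (κ i)) (j : ι)
    (hp : ∀ i, i ≠ j → p i ≠ ∞)
    (G : Set ((κ j).ord.ToType)) (hG : G.Finite) :
    IsOpen {x : ∀ i, Alpha (κ i) | (∀ i, i ≠ j → x i = p i) ∧ x j ∉ ((↑) '' G : Set (Alpha (κ j)))} := by
  have : {x : ∀ i, Alpha (κ i) | (∀ i, i ≠ j → x i = p i) ∧ x j ∉ ((↑) '' G : Set (Alpha (κ j)))} =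
      (⋂ i ∈ {i : ι | i ≠ j}, (fun x : ∀ i, Alpha (κ i) => x i) ⁻¹' {p i}) ∩
        ((fun x : ∀ i, Alpha (κ i) => x j) ⁻¹' (((↑) '' G : Set (Alpha (κ j)))ᶜ)) := by
    ext x
    simp only [Set.mem_setOf_eq, Set.mem_inter_iff, Set.mem_iInter, Set.mem_preimage,
      Set.mem_singleton_iff, Set.mem_compl_iff]
  rw [this]
  refine IsOpen.inter ?_ ((cofin_open G hG).preimage (continuous_apply j))
  exact (Set.toFinite {i : ι | i ≠ j}).isOpen_biInter fun i hi =>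
    (singleton_open _ (hp i hi)).preimage (continuous_apply i)


lemma fubiniY (n : ℕ) (κ : Fin (n+1) → Cardinal.{0}) (hinf : ∀ i, ℵ₀ ≤ κ i) (hn : 1 ≤ n)
    (Z : Fin (n + 1) → Set (∀ i, (κ i).ord.ToType))
    (hZd : Pairwise (Disjoint on Z)) (hZu : (⋃ j, Z j) = Set.univ)
    (hZf : ∀ (j : Fin (n + 1)) (x : ∀ i, (κ i).ord.ToType),
        {v : (κ j).ord.ToType | Function.update x j v ∈ Z j}.Finite) :
    ∃ Y : Fin (n + 1) → Set (∀ i, Alpha (κ i)), IsFubini κ (n - 1) Y := by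
  classical
  have hnetop : ∀ i : Fin (n+1), Nonempty ((κ i).ord.ToType) := by
    intro i
    rw [Ordinal.toType_nonempty_iff_ne_zero]
    intro h0
    have h := Cardinal.card_ord (κ i)
    rw [h0] at h
    simp only [Ordinal.card_zero] at h
    have h2 := hinf i
    rw [← h] at h2
    simp only [le_zero_iff] at h2
    exact Cardinal.aleph0_ne_zero h2
  set Y : Fin (n + 1) → Set (∀ i, Alpha (κ i)) := fun j =>
    {x | ∃ h : ∀ i, x i ≠ ∞, (fun i => untop0 (x i) (h i)) ∈ Z j} ∪
    {x | (∃ i, x i = ∞) ∧ x j ≠ ∞ ∧ ∀ i, i < j → x i = ∞} with hYdef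
  have hY0 : ∀ j x, x ∈ Y j → x j ≠ ∞ := by
    rintro j x (⟨h, _⟩ | ⟨_, h, _⟩)
    · exact h j
    · exact h
  have hYfin : ∀ j x (h : ∀ i, x i ≠ ∞), x ∈ Y j ↔ (fun i => untop0 (x i) (h i)) ∈ Z j := by
    intro j x h
    constructor
    · rintro (⟨h', hmem⟩ | ⟨⟨i, hi⟩, _, _⟩)
      · convert hmem using 2
      · exact absurd hi (h i)
    · intro hmem
      exact Or.inl ⟨h, hmem⟩
  have hmixed : ∀ x : ∀ i, Alpha (κ i), (∃ i, x i ≠ ∞) → (∃ i, x i = ∞) →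
      ∃ j, x ∈ Y j ∧ x j ≠ ∞ := by
    intro x hfin hinfc
    have hne : (Finset.univ.filter (fun i => x i ≠ ∞)).Nonempty := by
      obtain ⟨i, hi⟩ := hfin
      exact ⟨i, Finset.mem_filter.mpr ⟨Finset.mem_univ _, hi⟩⟩
    set j := (Finset.univ.filter (fun i => x i ≠ ∞)).min' hne with hj
    have hjmem := Finset.mem_filter.mp ((Finset.univ.filter (fun i => x i ≠ ∞)).min'_mem hne)
    refine ⟨j, Or.inr ⟨hinfc, hjmem.2, ?_⟩, hjmem.2⟩
    intro i hij
    by_contra hi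
    have : j ≤ i := Finset.min'_le _ i (Finset.mem_filter.mpr ⟨Finset.mem_univ _, hi⟩)
    exact absurd hij (not_lt.mpr this)
  have hYu : (⋃ i, Y i) = Xminus κ := by
    ext x
    simp only [Set.mem_iUnion]
    constructor
    · rintro ⟨j, hj⟩
      exact ⟨j, hY0 j x hj⟩
    · intro hx
      by_cases hall : ∀ i, x i ≠ ∞
      · have : (fun i => untop0 (x i) (hall i)) ∈ ⋃ j, Z j := by rw [hZu]; trivial
        obtain ⟨j, hj⟩ := Set.mem_iUnion.mp this
        exact ⟨j, Or.inl ⟨hall, hj⟩⟩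
      · push_neg at hall
        obtain ⟨j, hj, _⟩ := hmixed x hx (by simpa using hall)
        exact ⟨j, hj⟩
  have hYd : Pairwise (Disjoint on Y) := by
    intro a b hab
    refine Set.disjoint_left.mpr ?_
    rintro x hxa hxb
    rcases hxa with ⟨ha, hma⟩ | ⟨⟨i, hi⟩, hja, hlta⟩
    · rcases hxb with ⟨hb, hmb⟩ | ⟨⟨i, hi⟩, _, _⟩
      · have hmb' : (fun i => untop0 (x i) (ha i)) ∈ Z b := by convert hmb using 2
        exact Set.disjoint_left.mp (hZd hab) hma hmb'
      · exact ha i hi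
    · rcases hxb with ⟨hb, _⟩ | ⟨_, hjb, hltb⟩
      · exact hb i hi
      · rcases lt_or_gt_of_ne hab with h | h
        · exact hja (hltb a h)
        · exact hjb (hlta b h)
  -- the two shapes of A
  have hAshape : ∀ A : Finset (Fin (n+1)), n ≤ A.card →
      A = Finset.univ ∨ ∃ j, A = Finset.univ.erase j := by
    intro A hA
    have hcle : A.card ≤ n + 1 := by
      have := Finset.card_le_univ A
      simpa using this
    rcases eq_or_lt_of_le hcle with he | hlt
    · left
      apply Finset.eq_univ_of_card
      simpa using he
    · right
      have hc : Aᶜ.card = 1 := by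
        rw [Finset.card_compl]
        simp only [Fintype.card_fin]
        omega
      obtain ⟨j, hj⟩ := Finset.card_eq_one.mp hc
      refine ⟨j, ?_⟩
      have h1 : A = Aᶜᶜ := by simp
      rw [h1, hj]
      ext i
      simp [Finset.mem_erase, and_comm]
  -- the finite bad set around a point
  refine ⟨Y, hYd, hYu, ?_⟩
  intro A hcardA
  have hA : n ≤ A.card := by omega
  constructor
  · -- clopen condition
    intro i hiA
    rcases hAshape A hA with rfl | ⟨j, rfl⟩
    · exact absurd (Finset.mem_univ i) hiA
    have hij : i = j := by
      by_contra hij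
      exact hiA (Finset.mem_erase.mpr ⟨hij, Finset.mem_univ _⟩)
    subst hij
    constructor
    · -- closed : complement open
      rw [← isOpen_compl_iff]
      rw [isOpen_iff_forall_mem_open]
      rintro q hq
      by_cases hqi : q.1 i ≠ ∞
      · refine ⟨Subtype.val ⁻¹' {x | ∀ k, x k = q.1 k}, ?_, ?_, fun k => rfl⟩
        · intro r hr
          have hr1 : r.1 = q.1 := funext hr
          show r.1 ∉ Y i
          rw [hr1]
          exact hq
        · have hqfin : ∀ k, q.1 k ≠ ∞ := by
            intro k
            by_cases hk : k = i
            · subst hk; exact hqi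
            · exact q.2 k (Finset.mem_erase.mpr ⟨hk, Finset.mem_univ _⟩)
          exact (pt_open q.1 hqfin).preimage continuous_subtype_val
      · push_neg at hqi
        have hqfin : ∀ k, k ≠ i → q.1 k ≠ ∞ :=
          fun k hk => q.2 k (Finset.mem_erase.mpr ⟨hk, Finset.mem_univ _⟩)
        set pt : ∀ k, (κ k).ord.ToType := fun k =>
          if h : k = i then (hnetop k).some else untop0 (q.1 k) (hqfin k h) with hptdef
        set G := {v : (κ i).ord.ToType | Function.update pt i v ∈ Z i} with hGdef
        refine ⟨Subtype.val ⁻¹' {x | (∀ k, k ≠ i → x k = q.1 k) ∧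
          x i ∉ ((↑) '' G : Set (Alpha (κ i)))}, ?_, ?_, ?_, ?_⟩
        · rintro r ⟨hr1, hr2⟩
          show r.1 ∉ Y i
          intro hrY
          have hri : r.1 i ≠ ∞ := hY0 i r.1 hrY
          have hrfin : ∀ k, r.1 k ≠ ∞ := by
            intro k
            by_cases hk : k = i
            · subst hk; exact hri
            · rw [hr1 k hk]; exact hqfin k hk
          have hmem := (hYfin i r.1 hrfin).mp hrY
          have hv : (fun k => untop0 (r.1 k) (hrfin k)) = Function.update pt i (untop0 (r.1 i) hri) := by
            funext k
            by_cases hk : k = i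
            · subst hk
              rw [Function.update_self]
            · rw [Function.update_of_ne hk]
              rw [hptdef]
              simp only [dif_neg hk]
              exact untop0_congr _ _ _ _ (hr1 k hk)
          rw [hv] at hmem
          exact hr2 ⟨untop0 (r.1 i) hri, hmem, untop0_spec _ hri⟩
        · exact (nbhd_open q.1 i hqfin G (hZf i pt)).preimage continuous_subtype_val
        · exact fun k hk => rfl
        · rw [hqi]
          exact OnePoint.infty_notMem_image_coe
    · -- open
      rw [isOpen_iff_forall_mem_open]
      intro q hq
      have hqY : q.1 ∈ Y i := hq
      have hqi : q.1 i ≠ ∞ := hY0 i q.1 hqY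
      have hqfin : ∀ k, q.1 k ≠ ∞ := by
        intro k
        by_cases hk : k = i
        · subst hk; exact hqi
        · exact q.2 k (Finset.mem_erase.mpr ⟨hk, Finset.mem_univ _⟩)
      refine ⟨Subtype.val ⁻¹' {x | ∀ k, x k = q.1 k}, ?_, ?_, fun k => rfl⟩
      · intro r hr
        have hr1 : r.1 = q.1 := funext hr
        show r.1 ∈ Y i
        rw [hr1]
        exact hqY
      · exact (pt_open q.1 hqfin).preimage continuous_subtype_val
  · -- interior condition
    rcases hAshape A hA with rfl | ⟨j, rfl⟩
    · have h1 : (Subtype.val : ↥(Xminus κ) → _) ⁻¹' (⋃ i ∈ (Finset.univ : Finset (Fin (n+1))), Y i) = Set.univ := by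
        ext q
        simp only [Set.mem_preimage, Set.mem_iUnion, Set.mem_univ, iff_true]
        have : q.1 ∈ ⋃ i, Y i := by rw [hYu]; exact q.2
        obtain ⟨i, hi⟩ := Set.mem_iUnion.mp this
        exact ⟨i, Finset.mem_univ _, hi⟩
      rw [h1, interior_univ]
      exact Set.subset_univ _
    · intro q hq
      have hqFF : q.1 ∈ FF κ (Finset.univ.erase j) := hq
      have hqj : q.1 j = ∞ := by
        by_contra h
        have := (hqFF j).mp h
        exact absurd this (Finset.notMem_erase _ _)
      have hqfin : ∀ k, k ≠ j → q.1 k ≠ ∞ :=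
        fun k hk => (hqFF k).mpr (Finset.mem_erase.mpr ⟨hk, Finset.mem_univ _⟩)
      set pt : ∀ k, (κ k).ord.ToType := fun k =>
        if h : k = j then (hnetop k).some else untop0 (q.1 k) (hqfin k h) with hptdef
      set G := {v : (κ j).ord.ToType | Function.update pt j v ∈ Z j} with hGdef
      set N := {x : ∀ i, Alpha (κ i) | (∀ k, k ≠ j → x k = q.1 k) ∧
          x j ∉ ((↑) '' G : Set (Alpha (κ j)))} with hNdef
      have hNsub : (Subtype.val : ↥(Xminus κ) → _) ⁻¹' N ⊆
          (Subtype.val : ↥(Xminus κ) → _) ⁻¹' ⋃ i ∈ Finset.univ.erase j, Y i := by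
        rintro r ⟨hr1, hr2⟩
        simp only [Set.mem_preimage, Set.mem_iUnion]
        by_cases hrj : r.1 j = ∞
        · obtain ⟨i, hiY, hine⟩ := hmixed r.1 r.2 ⟨j, hrj⟩
          have hij : i ≠ j := fun h => hine (h ▸ hrj)
          exact ⟨i, Finset.mem_erase.mpr ⟨hij, Finset.mem_univ _⟩, hiY⟩
        · have hrfin : ∀ k, r.1 k ≠ ∞ := by
            intro k
            by_cases hk : k = j
            · subst hk; exact hrj
            · rw [hr1 k hk]; exact hqfin k hk
          have hvup : (fun k => untop0 (r.1 k) (hrfin k)) =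
              Function.update pt j (untop0 (r.1 j) hrj) := by
            funext k
            by_cases hk : k = j
            · subst hk
              rw [Function.update_self]
            · rw [Function.update_of_ne hk]
              rw [hptdef]
              simp only [dif_neg hk]
              exact untop0_congr _ _ _ _ (hr1 k hk)
          have : (fun k => untop0 (r.1 k) (hrfin k)) ∈ ⋃ i, Z i := by rw [hZu]; trivial
          obtain ⟨i, hiZ⟩ := Set.mem_iUnion.mp this
          have hij : i ≠ j := by
            intro h
            rw [h] at hiZ
            rw [hvup] at hiZ
            exact hr2 ⟨untop0 (r.1 j) hrj, hiZ, untop0_spec _ hrj⟩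
          exact ⟨i, Finset.mem_erase.mpr ⟨hij, Finset.mem_univ _⟩,
            Or.inl ⟨hrfin, hiZ⟩⟩
      have hNopen : IsOpen ((Subtype.val : ↥(Xminus κ) → _) ⁻¹' N) :=
        (nbhd_open q.1 j hqfin G (hZf j pt)).preimage continuous_subtype_val
      have hqN : q ∈ (Subtype.val : ↥(Xminus κ) → _) ⁻¹' N := by
        refine ⟨fun k hk => rfl, ?_⟩
        rw [hqj]
        exact OnePoint.infty_notMem_image_coe
      exact interior_maximal hNsub hNopen hqN

end MyAux

/-- If `κ_{i₀} < ℵ_{i₀}` for some `i₀ ≤ n`, then `X(κ)⁻` admits an `(n-1)`-Fubini partition;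
equivalently `∏_{i ≤ n} κᵢ` can be partitioned into sets `Y₀, …, Y_n` with each `Y_j` finite in
the `j`-th coordinate direction. -/
theorem stmt13 (n : ℕ) (κ : Fin (n + 1) → Cardinal) (hmono : Monotone κ)
    (hinf : ∀ i, ℵ₀ ≤ κ i)
    (hsmall : ∃ i : Fin (n + 1), κ i < Cardinal.aleph (i : ℕ)) :
    (∃ Y : Fin (n + 1) → Set (∀ i, Alpha (κ i)), IsFubini κ (n - 1) Y) ∧
    ∃ Z : Fin (n + 1) → Set (∀ i, (κ i).ord.ToType),
      Pairwise (Disjoint on Z) ∧ (⋃ j, Z j) = Set.univ ∧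
      ∀ (j : Fin (n + 1)) (x : ∀ i, (κ i).ord.ToType),
        {v : (κ j).ord.ToType | Function.update x j v ∈ Z j}.Finite := by
  obtain ⟨Z, hZd, hZu, hZf⟩ := partZ n κ hmono hinf hsmall
  have hn : 1 ≤ n := by
    obtain ⟨i₀, hi₀⟩ := hsmall
    rcases Nat.eq_zero_or_pos (i₀ : ℕ) with h0 | h0
    · exfalso
      rw [h0, show ((0:ℕ):Ordinal) = 0 by norm_num, Cardinal.aleph_zero] at hi₀
      exact absurd (hinf i₀) (not_le.mpr hi₀)
    · have := i₀.2
      omega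
  exact ⟨fubiniY n κ hinf hn Z hZd hZu hZf, Z, hZd, hZu, hZf⟩


end
end

section
/- Let κ = ⟨κ₀ ≤ … ≤ κ_n⟩ be a weakly increasing tuple of infinite cardinals such that κ_i < ℵ_i for some i ≤ n. Then H^n(X(κ)⁻, ℤ/2) = 0; concretely, every function f : ∏_{i≤n} κᵢ → ℤ/2 can be written as a sum f = Σ_{i≤n} g_i where each g_i : ∏_{i≤n} κᵢ → ℤ/2 extends to a continuous function on D_{{0,…,n}∖{i}} (equivalently, for each fixed choice of all coordinates other than the i-th, g_i is constant outside a finite set of values of the i-th coordinate). -/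
set_option linter.unusedSectionVars false

open Cardinal Function OnePoint

noncomputable section

variable {ι : Type} [Fintype ι] [DecidableEq ι]

section MyAux

universe u

open Finset in
/-- Kuratowski's free set theorem: if `#X < ℵ_m` then `X^{m+1}` admits a labelling
`F` such that each label-`p` fiber has finite sections in direction `p`. -/
private lemma kur_s14 : ∀ (m : ℕ) (X : Type u) (_ : #X < Cardinal.aleph m),
    ∃ F : (Fin (m + 1) → X) → Fin (m + 1),
      ∀ (p : Fin (m + 1)) (x : Fin (m + 1) → X),
        {t : X | F (Function.update x p t) = p}.Finite := by
  intro m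
  induction m with
  | zero =>
    intro X hX
    simp only [Nat.cast_zero, aleph_zero] at hX
    have : Finite X := Cardinal.lt_aleph0_iff_finite.mp hX
    exact ⟨fun _ => 0, fun p x => Set.toFinite _⟩
  | succ m ih =>
    intro X hX
    by_cases hXe : Nonempty X
    case neg =>
      haveI : IsEmpty X := not_nonempty_iff.mp hXe
      exact ⟨fun x => (IsEmpty.false (x 0)).elim, fun p x => (IsEmpty.false (x 0)).elim⟩
    haveI := hXe
    have hX' : #X ≤ Cardinal.aleph m := by
      rw [show ((m + 1 : ℕ) : Ordinal) = Order.succ (m : Ordinal) by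
        rw [Nat.cast_add, Nat.cast_one, Ordinal.add_one_eq_succ], aleph_succ] at hX
      exact Order.lt_succ_iff.mp hX
    set W := (Cardinal.aleph m).ord.ToType with hWdef
    have hXle : #X ≤ #W := by
      rw [Cardinal.mk_toType, Cardinal.card_ord]; exact hX'
    obtain ⟨e⟩ := (Cardinal.le_def X W).mp hXle
    -- initial segments are small
    have hseg : ∀ b : W, #{a : X // e a ≤ b} < Cardinal.aleph m := by
      intro b
      have h1 : #{a : X // e a ≤ b} ≤ #(Set.Iic b) :=
        Cardinal.mk_le_of_injective (f := fun a => (⟨e a.1, a.2⟩ : Set.Iic b))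
          (fun a a' h => Subtype.ext (e.injective (congrArg Subtype.val h)))
      have h2 : #(Set.Iic b) ≤ #(Set.Iio b) + 1 := by
        rw [← Set.Iio_insert]; exact Cardinal.mk_insert_le
      refine (h1.trans h2).trans_lt (Cardinal.add_lt_of_lt (aleph0_le_aleph _)
        (Cardinal.mk_Iio_ord_toType b) (one_lt_aleph0.trans_le (aleph0_le_aleph _)))
    choose Fb hFb using fun b : W => ih {a : X // e a ≤ b} (hseg b)
    -- a proof-free version of `Fb`
    set Gb : W → (Fin (m + 1) → X) → Fin (m + 1) := fun b v =>
      if h : ∀ j, e (v j) ≤ b then Fb b (fun j => ⟨v j, h j⟩) else 0 with hGbdef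
    have hGb : ∀ (b : W) (p : Fin (m + 1)) (v : Fin (m + 1) → X), (∀ j, e (v j) ≤ b) →
        {t : X | e t ≤ b ∧ Gb b (Function.update v p t) = p}.Finite := by
      intro b p v hv
      refine Set.Finite.subset (Set.Finite.image Subtype.val
        (hFb b p (fun j => ⟨v j, hv j⟩))) ?_
      rintro t ⟨ht, hGt⟩
      refine ⟨⟨t, ht⟩, ?_, rfl⟩
      have hall : ∀ j, e (Function.update v p t j) ≤ b := by
        intro j
        by_cases hj : j = p
        · subst hj; rw [Function.update_self]; exact ht
        · rw [Function.update_of_ne hj]; exact hv j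
      rw [hGbdef] at hGt
      simp only [dif_pos hall] at hGt
      have : (fun j => (⟨Function.update v p t j, hall j⟩ : {a : X // e a ≤ b}))
          = Function.update (fun j => (⟨v j, hv j⟩ : {a : X // e a ≤ b})) p ⟨t, ht⟩ := by
        funext j
        by_cases hj : j = p
        · subst hj; simp [Function.update_self]
        · simp [Function.update_of_ne hj]
      rw [this] at hGt
      exact hGt
    -- the "least index of a maximal coordinate" function
    have hne : ∀ x : Fin (m + 1 + 1) → X,
        ((Finset.univ : Finset (Fin (m + 1 + 1))).filter
          (fun j => ∀ j', e (x j') ≤ e (x j))).Nonempty := by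
      intro x
      obtain ⟨j, -, hj⟩ := Finset.exists_max_image Finset.univ (fun j => e (x j))
        ⟨0, Finset.mem_univ 0⟩
      exact ⟨j, Finset.mem_filter.mpr ⟨Finset.mem_univ _, fun j' => hj j' (Finset.mem_univ _)⟩⟩
    set kk : (Fin (m + 1 + 1) → X) → Fin (m + 1 + 1) := fun x =>
      ((Finset.univ.filter (fun j => ∀ j', e (x j') ≤ e (x j))).min' (hne x)) with hkkdef
    have kk_max : ∀ (x : Fin (m + 1 + 1) → X) (j' : Fin (m + 1 + 1)),
        e (x j') ≤ e (x (kk x)) := fun x j' =>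
      (Finset.mem_filter.mp (Finset.min'_mem _ (hne x))).2 j'
    have kk_min : ∀ (x) (j), (∀ j', e (x j') ≤ e (x j)) → kk x ≤ j := fun x j hj =>
      Finset.min'_le _ _ (Finset.mem_filter.mpr ⟨Finset.mem_univ _, hj⟩)
    set F : (Fin (m + 1 + 1) → X) → Fin (m + 1 + 1) := fun x =>
      (kk x).succAbove (Gb (e (x (kk x))) (fun j => x ((kk x).succAbove j))) with hFdef
    refine ⟨F, ?_⟩
    intro p x
    -- the least index `k₀ ≠ p` of a maximal coordinate among the fixed ones
    have hne' : ((Finset.univ.erase p).filter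
        (fun j => ∀ j' ∈ Finset.univ.erase p, e (x j') ≤ e (x j))).Nonempty := by
      obtain ⟨q, hq⟩ := exists_ne p
      obtain ⟨j, hj, hjmax⟩ := Finset.exists_max_image (Finset.univ.erase p)
        (fun j => e (x j)) ⟨q, Finset.mem_erase.mpr ⟨hq, Finset.mem_univ q⟩⟩
      exact ⟨j, Finset.mem_filter.mpr ⟨hj, hjmax⟩⟩
    set k₀ : Fin (m + 1 + 1) := (_ : Finset _).min' hne' with hk₀def
    have hk₀mem := Finset.min'_mem _ hne'
    rw [Finset.mem_filter, Finset.mem_erase] at hk₀mem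
    have hk₀ne : k₀ ≠ p := hk₀mem.1.1
    have hk₀max : ∀ j, j ≠ p → e (x j) ≤ e (x k₀) := fun j hj =>
      hk₀mem.2 j (Finset.mem_erase.mpr ⟨hj, Finset.mem_univ j⟩)
    obtain ⟨j₀, hj₀⟩ := Fin.exists_succAbove_eq (Ne.symm hk₀ne)
    set M₀ := e (x k₀) with hM₀def
    set v₀ : Fin (m + 1) → X := fun j => Function.update x p (x k₀) (k₀.succAbove j)
      with hv₀def
    have hv₀ : ∀ j, e (v₀ j) ≤ M₀ := by
      intro j
      show e (Function.update x p (x k₀) (k₀.succAbove j)) ≤ M₀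
      by_cases hj : k₀.succAbove j = p
      · rw [hj, Function.update_self]
      · rw [Function.update_of_ne hj]; exact hk₀max _ hj
    refine Set.Finite.subset (hGb M₀ j₀ v₀ hv₀) ?_
    intro t ht
    simp only [Set.mem_setOf_eq] at ht ⊢
    set y := Function.update x p t with hydef
    -- basic facts about `kk y`
    have hkky_ne : kk y ≠ p := by
      intro hkk
      have := Fin.succAbove_ne (kk y) (Gb (e (y (kk y))) (fun j => y ((kk y).succAbove j)))
      rw [hFdef] at ht
      exact this (ht.trans hkk.symm)
    have hy_of_ne : ∀ j, j ≠ p → y j = x j := fun j hj => Function.update_of_ne hj _ _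
    have h1 : e (x (kk y)) ≤ M₀ := hk₀max _ hkky_ne
    have hyp : y p = t := Function.update_self _ _ _
    have het : e t ≤ M₀ := by
      calc e t = e (y p) := by rw [hyp]
        _ ≤ e (y (kk y)) := kk_max y p
        _ = e (x (kk y)) := by rw [hy_of_ne _ hkky_ne]
        _ ≤ M₀ := h1
    have hyk₀ : y k₀ = x k₀ := hy_of_ne _ hk₀ne
    have hkky : kk y = k₀ := by
      have hle1 : kk y ≤ k₀ := by
        apply kk_min
        intro j'
        rw [hyk₀]
        by_cases hj' : j' = p
        · subst hj'; rw [hyp]; exact het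
        · rw [hy_of_ne _ hj']; exact hk₀max _ hj'
      have hle2 : k₀ ≤ kk y := by
        apply Finset.min'_le
        rw [Finset.mem_filter, Finset.mem_erase]
        refine ⟨⟨hkky_ne, Finset.mem_univ _⟩, fun j' hj' => ?_⟩
        rw [Finset.mem_erase] at hj'
        have := kk_max y j'
        rwa [hy_of_ne _ hj'.1, hy_of_ne _ hkky_ne] at this
      exact le_antisymm hle1 hle2
    -- rewrite `F y = p` using `kk y = k₀`
    rw [hFdef] at ht
    simp only at ht
    rw [hkky, hyk₀, ← hM₀def] at ht
    have harg : (fun j => y (k₀.succAbove j)) = Function.update v₀ j₀ t := by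
      funext j
      by_cases hj : j = j₀
      · subst hj; rw [hj₀, Function.update_self, hyp]
      · have hsa : k₀.succAbove j ≠ p := by
          rw [← hj₀]; exact fun hc => hj (Fin.succAbove_right_injective hc)
        rw [Function.update_of_ne hj, hy_of_ne _ hsa]
        show x (k₀.succAbove j) = Function.update x p (x k₀) (k₀.succAbove j)
        rw [Function.update_of_ne hsa]
    rw [harg] at ht
    have : Gb M₀ (Function.update v₀ j₀ t) = j₀ := by
      apply Fin.succAbove_right_injective (p := k₀)
      rw [ht, hj₀]
    exact ⟨het, this⟩

/-- Extraction of the underlying point of a non-infinity element of a one-point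
compactification. -/
private noncomputable def unco {Y : Type} {y : OnePoint Y} (h : y ≠ ∞) : Y :=
  (OnePoint.ne_infty_iff_exists.mp h).choose

private lemma unco_spec {Y : Type} {y : OnePoint Y} (h : y ≠ ∞) :
    ((unco h : Y) : OnePoint Y) = y :=
  (OnePoint.ne_infty_iff_exists.mp h).choose_spec

private lemma unco_eq {Y : Type} {y : OnePoint Y} (h : y ≠ ∞) {a : Y}
    (ha : (a : OnePoint Y) = y) : unco h = a :=
  OnePoint.coe_injective (by rw [unco_spec h, ha])

private lemma contAt_of_eventually {Z : Type*} [TopologicalSpace Z] {f : Z → ZMod 2} {z : Z}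
    (h : ∀ᶠ w in nhds z, f w = f z) : ContinuousAt f z := by
  unfold ContinuousAt
  rw [nhds_discrete (ZMod 2)]
  exact Filter.tendsto_pure.mpr h

/-- A function with finite sections in direction `j` (relative to the value `0` at
infinity) extends continuously to `D_{univ ∖ {j}}`. -/
private lemma extend_cont {n : ℕ} (κ : Fin (n + 1) → Cardinal) (hinf : ∀ i, ℵ₀ ≤ κ i)
    (j : Fin (n + 1)) (g : (∀ i, (κ i).ord.ToType) → ZMod 2)
    (hfin : ∀ x : ∀ i, (κ i).ord.ToType,
      {t : (κ j).ord.ToType | g (Function.update x j t) ≠ 0}.Finite) :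
    ∃ G : ↥(DD κ (Finset.univ.erase j)) → ZMod 2, Continuous G ∧
      ∀ x : ∀ i, (κ i).ord.ToType, g x = G ⟨fun i => ((x i : (κ i).ord.ToType) : Alpha (κ i)),
        fun i _ => OnePoint.coe_ne_infty (x i)⟩ := by
  classical
  haveI hne : ∀ i, Nonempty (κ i).ord.ToType := fun i =>
    Ordinal.toType_nonempty_iff_ne_zero.mpr (fun hc => by
      have := hinf i
      rw [Cardinal.ord_eq_zero.mp hc] at this
      exact Cardinal.aleph0_ne_zero (by simpa using this))
  have hmem : ∀ (z : ↥(DD κ (Finset.univ.erase j))) (i : Fin (n + 1)), i ≠ j → z.1 i ≠ ∞ :=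
    fun z i hi => z.2 i (Finset.mem_erase.mpr ⟨hi, Finset.mem_univ i⟩)
  have allne : ∀ z : ↥(DD κ (Finset.univ.erase j)), z.1 j ≠ ∞ → ∀ i, z.1 i ≠ ∞ := by
    intro z hj i
    by_cases hij : i = j
    · rwa [hij]
    · exact hmem z i hij
  set G : ↥(DD κ (Finset.univ.erase j)) → ZMod 2 := fun z =>
    if h : z.1 j = ∞ then 0 else g (fun i => unco (allne z h i)) with hGdef
  have compat : ∀ x : ∀ i, (κ i).ord.ToType,
      g x = G ⟨fun i => ((x i : (κ i).ord.ToType) : Alpha (κ i)),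
        fun i _ => OnePoint.coe_ne_infty (x i)⟩ := by
    intro x
    simp only [hGdef]
    rw [dif_neg (OnePoint.coe_ne_infty (x j))]
    exact (congrArg g (funext fun i => (unco_eq _ rfl))).symm
  refine ⟨G, ?_, compat⟩
  rw [continuous_iff_continuousAt]
  intro z
  by_cases hz : z.1 j = ∞
  case neg =>
    -- `z` is an isolated point
    have hU : IsOpen {w : ∀ i, Alpha (κ i) | ∀ i, w i = z.1 i} := by
      have : {w : ∀ i, Alpha (κ i) | ∀ i, w i = z.1 i}
          = ⋂ i, (fun w : ∀ i', Alpha (κ i') => w i) ⁻¹' {z.1 i} := by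
        ext w; simp [Set.mem_iInter]
      rw [this]
      refine isOpen_iInter_of_finite fun i => (continuous_apply i).isOpen_preimage _ ?_
      rw [OnePoint.isOpen_iff_of_notMem]
      · exact isOpen_discrete _
      · simp only [Set.mem_singleton_iff]
        exact fun hc => allne z hz i hc.symm
    apply contAt_of_eventually
    have hmem' : Subtype.val ⁻¹' {w : ∀ i, Alpha (κ i) | ∀ i, w i = z.1 i}
        ∈ nhds z :=
      continuous_subtype_val.continuousAt.preimage_mem_nhds
        (hU.mem_nhds (fun i => rfl))
    filter_upwards [hmem'] with w hw
    have : w = z := Subtype.ext (funext hw)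
    rw [this]
  case pos =>
    -- `z` has `j`-th coordinate `∞`
    set xb : ∀ i, (κ i).ord.ToType := fun i =>
      if h : z.1 i = ∞ then Classical.arbitrary _ else unco h with hxbdef
    have hS := hfin xb
    set S := {t : (κ j).ord.ToType | g (Function.update xb j t) ≠ 0} with hSdef
    set U : Set (∀ i, Alpha (κ i)) :=
      ((fun w : ∀ i, Alpha (κ i) => w j) ⁻¹' ((fun t : (κ j).ord.ToType =>
          (t : Alpha (κ j))) '' S)ᶜ) ∩
        ⋂ i, (fun w : ∀ i', Alpha (κ i') => w i) ⁻¹'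
          (if i = j then Set.univ else {z.1 i}) with hUdef
    have hUopen : IsOpen U := by
      refine IsOpen.inter ((continuous_apply j).isOpen_preimage _ ?_)
        (isOpen_iInter_of_finite fun i => (continuous_apply i).isOpen_preimage _ ?_)
      · exact OnePoint.isOpen_compl_image_coe.mpr ⟨isClosed_discrete S, hS.isCompact⟩
      · by_cases hij : i = j
        · rw [if_pos hij]; exact isOpen_univ
        · rw [if_neg hij, OnePoint.isOpen_iff_of_notMem]
          · exact isOpen_discrete _
          · simp only [Set.mem_singleton_iff]
            exact fun hc => hmem z i hij hc.symm
    have hzU : z.1 ∈ U := by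
      constructor
      · rw [Set.mem_preimage, hz]
        exact OnePoint.infty_notMem_image_coe
      · rw [Set.mem_iInter]
        intro i
        by_cases hij : i = j
        · rw [Set.mem_preimage, if_pos hij]; trivial
        · rw [Set.mem_preimage, if_neg hij]; rfl
    apply contAt_of_eventually
    have hmem' : Subtype.val ⁻¹' U ∈ nhds z :=
      continuous_subtype_val.continuousAt.preimage_mem_nhds (hUopen.mem_nhds hzU)
    filter_upwards [hmem'] with w hw
    have hGz : G z = 0 := by simp only [hGdef]; exact dif_pos hz
    rw [hGz]
    simp only [hGdef]
    by_cases hwj : w.1 j = ∞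
    · exact dif_pos hwj
    · rw [dif_neg hwj]
      set t := unco hwj with htdef
      have hwfix : ∀ i, i ≠ j → w.1 i = z.1 i := by
        intro i hij
        have := hw.2
        rw [Set.mem_iInter] at this
        have h2 := this i
        rw [Set.mem_preimage, if_neg hij] at h2
        exact h2
      have harg : (fun i => unco (allne w hwj i)) = Function.update xb j t := by
        funext i
        by_cases hij : i = j
        · subst hij
          rw [Function.update_self]
        · rw [Function.update_of_ne hij]
          have hzi : z.1 i ≠ ∞ := hmem z i hij
          have hxbi : xb i = unco hzi := by
            simp only [hxbdef]
            exact dif_neg hzi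
          rw [hxbi]
          exact unco_eq _ ((unco_spec hzi).trans (hwfix i hij).symm)
      rw [harg]
      have htS : t ∉ S := by
        intro hc
        have := hw.1
        rw [Set.mem_preimage] at this
        exact this ⟨t, hc, unco_spec hwj⟩
      by_contra hcon
      exact htS hcon

/-- The labelling of the full product with finite sections. -/
private lemma sections_lemma (n : ℕ) (κ : Fin (n + 1) → Cardinal) (hmono : Monotone κ)
    (hsmall : ∃ i : Fin (n + 1), κ i < Cardinal.aleph (i : ℕ)) :
    ∃ G : (∀ i, (κ i).ord.ToType) → Fin (n + 1),
      ∀ (p : Fin (n + 1)) (x : ∀ i, (κ i).ord.ToType),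
        {t : (κ p).ord.ToType | G (Function.update x p t) = p}.Finite := by
  classical
  obtain ⟨i, hi⟩ := hsmall
  have hle : (i : ℕ) + 1 ≤ n + 1 := i.isLt
  set X := (κ i).ord.ToType with hXdef
  have hXcard : #X < Cardinal.aleph (i : ℕ) := by
    rw [hXdef, Cardinal.mk_toType, Cardinal.card_ord]; exact hi
  obtain ⟨F, hF⟩ := kur_s14 (i : ℕ) X hXcard
  have hemb : ∀ j : Fin ((i : ℕ) + 1),
      Nonempty ((κ (Fin.castLE hle j)).ord.ToType ↪ X) := by
    intro j
    rw [← Cardinal.le_def, hXdef, Cardinal.mk_toType, Cardinal.mk_toType,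
      Cardinal.card_ord, Cardinal.card_ord]
    exact hmono (show Fin.castLE hle j ≤ i from Fin.le_def.mpr (Nat.lt_succ_iff.mp j.isLt))
  have e := fun j => (hemb j).some
  refine ⟨fun x => Fin.castLE hle (F (fun j => e j (x (Fin.castLE hle j)))), ?_⟩
  intro p x
  by_cases hp : (p : ℕ) < (i : ℕ) + 1
  case pos =>
    set p' : Fin ((i : ℕ) + 1) := ⟨(p : ℕ), hp⟩ with hp'def
    have hpp' : Fin.castLE hle p' = p := rfl
    set w₀ : ∀ j : Fin ((i : ℕ) + 1), (κ (Fin.castLE hle j)).ord.ToType →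
        X := fun j => e j with hw₀def
    have key : ∀ t : (κ p).ord.ToType,
        (fun j => e j (Function.update x p t (Fin.castLE hle j)))
          = Function.update (fun j => e j (x (Fin.castLE hle j))) p'
            (e p' t) := by
      intro t
      funext j
      by_cases hj : j = p'
      · subst hj
        show e p' (Function.update x p t p)
          = Function.update (fun j => e j (x (Fin.castLE hle j))) p' (e p' t) p'
        rw [Function.update_self, Function.update_self]
      · have : Fin.castLE hle j ≠ p := by
          rw [← hpp']
          exact fun hc => hj (Fin.castLE_injective hle hc)
        rw [Function.update_of_ne this, Function.update_of_ne hj]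
    have : {t : (κ p).ord.ToType |
        Fin.castLE hle (F (fun j => e j (Function.update x p t (Fin.castLE hle j)))) = p}
          = (fun t : (κ p).ord.ToType => e p' t) ⁻¹'
            {s : X | F (Function.update (fun j => e j (x (Fin.castLE hle j))) p' s) = p'} := by
      ext t
      simp only [Set.mem_setOf_eq, Set.mem_preimage, key t]
      constructor
      · intro h
        apply Fin.castLE_injective hle
        rw [h, hpp']
      · intro h
        rw [h, hpp']
    rw [this]
    exact Set.Finite.preimage (Set.injOn_of_injective
      (fun a b hab => (e p').injective hab)) (hF p' _)
  case neg =>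
    refine Set.Finite.subset (Set.finite_empty) ?_
    intro t ht
    simp only [Set.mem_setOf_eq] at ht
    have : (p : ℕ) < (i : ℕ) + 1 := by
      rw [← ht]
      exact (F _).isLt
    exact absurd this hp

end MyAux

/-- If `κ_i < ℵ_i` for some `i ≤ n`, then `H^n(X(κ)⁻, ℤ/2) = 0`: every function
`∏_{i ≤ n} κᵢ → ℤ/2` is a top-degree coboundary. -/
theorem stmt14 (n : ℕ) (κ : Fin (n + 1) → Cardinal) (hmono : Monotone κ)
    (hinf : ∀ i, ℵ₀ ≤ κ i)
    (hsmall : ∃ i : Fin (n + 1), κ i < Cardinal.aleph (i : ℕ))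
    (f : (∀ i, (κ i).ord.ToType) → ZMod 2) :
    TopCoboundary κ f := by
  classical
  obtain ⟨G, hG⟩ := sections_lemma n κ hmono hsmall
  refine ⟨fun j x => if G x = j then f x else 0, ?_, ?_⟩
  · intro x
    rw [Finset.sum_ite_eq]
    simp
  · intro j
    apply extend_cont κ hinf j
    intro x
    refine Set.Finite.subset (hG j x) ?_
    intro t ht
    simp only [Set.mem_setOf_eq] at ht ⊢
    by_contra hcon
    rw [if_neg hcon] at ht
    exact ht rfl

end
end

section
/- Let 0 < k < n, let κ = ⟨κ₀,…,κ_n⟩ be a tuple of infinite cardinals, let B ⊆ {0,…,n} with |B| = k+1, and let f = ⟨f_A⟩ be a k-cocycle on X(κ)⁻. Define φ_{f,B} : ∏_{i∉B} α(κᵢ) → (∏_{i∈B} κᵢ → ℤ/2) by φ_{f,B}(x)(y) = f_B(x, y). Then φ_{f,B} is continuous when the codomain carries the product (pointwise-convergence) topology with ℤ/2 discrete; moreover, for every x ∈ ∏_{i∉B} α(κᵢ) other than (∞,…,∞), the function φ_{f,B}(x) is a top-degree coboundary for the tuple κ↾B. -/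
set_option linter.unusedSectionVars false

open Cardinal Function OnePoint

noncomputable section

variable {ι : Type} [Fintype ι] [DecidableEq ι]

/-- Combine a point off `B` with a point of `∏_{i∈B} α(κ i)` (not just `∏_{i∈B} κ i`). -/
def zcomb (κ : ι → Cardinal) (B : Finset ι)
    (x : ∀ i : {i : ι // i ∉ B}, Alpha (κ i))
    (w : ∀ i : ↥B, Alpha (κ (i : ι))) : ∀ i, Alpha (κ i) :=
  fun i => if h : i ∈ B then w ⟨i, h⟩ else x ⟨i, h⟩

lemma fcast {κ : ι → Cardinal} (f : Cochain κ) {A C : Finset ι} (h : A = C)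
    (v : ∀ i, Alpha (κ i)) (p : v ∈ DD κ A) (q : v ∈ DD κ C) :
    f A ⟨v, p⟩ = f C ⟨v, q⟩ := by subst h; rfl

/-- For a `k`-cocycle `f`, the map `φ_{f,B}` is continuous and sends every point other than
`(∞,…,∞)` to a top-degree coboundary of `κ↾B`. -/
theorem stmt16 (n k : ℕ) (hk0 : 0 < k) (hkn : k < n)
    (κ : Fin (n + 1) → Cardinal) (hinf : ∀ i, ℵ₀ ≤ κ i)
    (B : Finset (Fin (n + 1))) (hB : B.card = k + 1)
    (f : Cochain κ) (hf : IsCocycle κ k f) :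
    Continuous (phiMap κ B f) ∧
    ∀ x : ∀ i : {i : Fin (n + 1) // i ∉ B}, Alpha (κ (i : Fin (n + 1))),
      (∃ i, x i ≠ ∞) →
      TopCoboundary (fun i : ↥B => κ (i : Fin (n + 1))) (phiMap κ B f x) := by
  constructor
  · apply continuous_pi
    intro y
    apply (hf.1 B hB).comp
    apply Continuous.subtype_mk
    apply continuous_pi
    intro i
    by_cases h : i ∈ B
    · simp only [combineBC, dif_pos h]
      exact continuous_const
    · simp only [combineBC, dif_neg h]
      exact continuous_apply _
  · rintro x ⟨i₀, hx⟩
    have hi₀B : (i₀ : Fin (n + 1)) ∉ B := i₀.2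
    set A' : Finset (Fin (n + 1)) := insert (i₀ : Fin (n + 1)) B with hA'
    have hA'card : A'.card = k + 2 := by
      rw [hA', Finset.card_insert_of_notMem hi₀B, hB]
    have hjA' : ∀ j : ↥B, (j : Fin (n + 1)) ∈ A' :=
      fun j => Finset.mem_insert_of_mem j.2
    have hzmem : ∀ (j : ↥B) (w : ↥(DD (fun i : ↥B => κ (i : Fin (n + 1)))
        (Finset.univ.erase j))), zcomb κ B x w.1 ∈ DD κ (A'.erase (j : Fin (n + 1))) := by
      rintro j w i hi
      rw [Finset.mem_erase, hA', Finset.mem_insert] at hi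
      obtain ⟨hij, hi⟩ := hi
      rcases hi with rfl | hiB
      · simp only [zcomb, dif_neg hi₀B]
        exact hx
      · simp only [zcomb, dif_pos hiB]
        exact w.2 ⟨i, hiB⟩ (Finset.mem_erase.2 ⟨fun he => hij (congrArg Subtype.val he),
          Finset.mem_univ _⟩)
    refine ⟨fun j y => f (A'.erase (j : Fin (n + 1)))
        ⟨zcomb κ B x (fun i => ((y i : (κ (i : Fin (n+1))).ord.ToType) : Alpha (κ (i : Fin (n+1))))),
          hzmem j ⟨_, fun i _ => OnePoint.coe_ne_infty _⟩⟩, ?_, ?_⟩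
    · intro y
      have hz : combineBC κ B x y ∈ DD κ A' := by
        intro i hi
        rw [hA', Finset.mem_insert] at hi
        rcases hi with rfl | hiB
        · simp only [combineBC, dif_neg hi₀B]
          exact hx
        · simp only [combineBC, dif_pos hiB]
          exact OnePoint.coe_ne_infty _
      have hmem : ∀ i : Fin (n + 1), combineBC κ B x y ∈ DD κ (A'.erase i) :=
        fun i m hm => hz m (Finset.erase_subset i A' hm)
      have hsplit := Finset.add_sum_erase A'
        (fun i => f (A'.erase i) ⟨combineBC κ B x y, hmem i⟩)
        (Finset.mem_insert_self ((i₀ : Fin (n + 1))) B)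
      have hsum : ∑ i ∈ A', f (A'.erase i) ⟨combineBC κ B x y, hmem i⟩ = 0 :=
        hf.2 A' hA'card ⟨_, hz⟩
      rw [hsum] at hsplit
      have hFi₀ : f (A'.erase (i₀ : Fin (n + 1))) ⟨combineBC κ B x y, hmem _⟩ =
          ∑ i ∈ A'.erase (i₀ : Fin (n + 1)),
            f (A'.erase i) ⟨combineBC κ B x y, hmem i⟩ := by
        have h2 := eq_neg_of_add_eq_zero_left hsplit
        rwa [CharTwo.neg_eq] at h2
      have hphi : phiMap κ B f x y = f (A'.erase (i₀ : Fin (n + 1)))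
          ⟨combineBC κ B x y, hmem _⟩ :=
        fcast f (Finset.erase_insert hi₀B).symm _ _ _
      rw [hphi, hFi₀,
        Finset.sum_congr (show A'.erase (i₀ : Fin (n + 1)) = B by
          rw [hA', Finset.erase_insert hi₀B]) (fun i _ => rfl),
        ← Finset.sum_coe_sort B]
      exact Finset.sum_congr rfl fun j _ => rfl
    · intro j
      refine ⟨fun w => f (A'.erase (j : Fin (n + 1))) ⟨zcomb κ B x w.1, hzmem j w⟩, ?_,
        fun y => rfl⟩
      apply (hf.1 _ ?_).comp (Continuous.subtype_mk ?_ _)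
      · rw [Finset.card_erase_of_mem (hjA' j), hA'card]
        omega
      · apply continuous_pi
        intro i
        by_cases h : i ∈ B
        · simp only [zcomb, dif_pos h]
          exact (continuous_apply _).comp continuous_subtype_val
        · simp only [zcomb, dif_neg h]
          exact continuous_const

end
end
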